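/- arXiv:0911.4136 — 3 statements merged into one kernel-verified Lean document; each statement's English description precedes it below -/
import Mathlib

section
/- Let L be the proper part of a finite lattice 𝓛, and let M be the set of all elements x ∈ L such that x = ⋀_{c∈C} c for some nonempty subset C of the set of maximal elements of L (the meet taken in 𝓛). Let R be the proper part of a sublattice of 𝓛 with M ⊆ R ⊆ L. Then ΔL and ΔR are homotopy equivalent. -/
open Classical in
/-- Affine extension of the vertex map `φ` to the order complex ambient space. -/
noncomputable def pushf {P : Type} [Fintype P] (φ : P → P) (f : P → ℝ) : P → ℝ :=
  fun y => ∑ x ∈ Finset.univ.filter (fun x => φ x = y), f x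

section basic
variable {P : Type} [Fintype P] {φ : P → P} {f : P → ℝ}

lemma pushf_nonneg (hf : ∀ x, 0 ≤ f x) : ∀ y, 0 ≤ pushf φ f y :=
  fun _ => Finset.sum_nonneg fun x _ => hf x

lemma sum_pushf : ∑ y, pushf φ f y = ∑ x, f x := by
  classical
  unfold pushf
  rw [Finset.sum_fiberwise Finset.univ φ f]

lemma support_pushf_subset : Function.support (pushf φ f) ⊆ φ '' Function.support f := by
  intro y hy
  obtain ⟨x, hx, hfx⟩ := Finset.exists_ne_zero_of_sum_ne_zero hy
  classical
  exact ⟨x, hfx, (Finset.mem_filter.1 hx).2⟩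

lemma pushf_eq_self (h : ∀ x ∈ Function.support f, φ x = x) : pushf φ f = f := by
  classical
  funext y
  unfold pushf
  rw [Finset.sum_filter]
  rw [Finset.sum_eq_single y]
  · by_cases hy : f y = 0
    · simp [hy]
    · simp [h y hy]
  · intro x _ hxy
    by_cases hx : f x = 0
    · simp [hx]
    · simp [h x hx, hxy]
  · simp

lemma continuous_pushf : Continuous (pushf φ : (P → ℝ) → (P → ℝ)) := by
  apply continuous_pi
  intro y
  exact continuous_finset_sum _ fun x _ => continuous_apply x

end basic



/-- The geometric realization of the order complex of the subposet of `P` induced on `S`: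
functions `P → ℝ` that are nonnegative, finitely supported, sum to `1`, and whose support is
a chain contained in `S`. Simplices are exactly the finite chains of `S`. -/
def ocSet (P : Type) [Preorder P] (S : Set P) : Set (P → ℝ) :=
  {f | (∀ x, 0 ≤ f x) ∧ (Function.support f).Finite ∧ (∑ᶠ x, f x) = 1 ∧
    Function.support f ⊆ S ∧ IsChain (· ≤ ·) (Function.support f)}

/-- The order complex `Δ S` of the subposet induced on `S`, as a topological space. -/
abbrev ΔSp {P : Type} [Preorder P] (S : Set P) : Type := ↥(ocSet P S)

lemma ocSet_mono {P : Type} [Preorder P] {S T : Set P} (h : S ⊆ T) :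
    ocSet P S ⊆ ocSet P T :=
  fun _ hf => ⟨hf.1, hf.2.1, hf.2.2.1, hf.2.2.2.1.trans h, hf.2.2.2.2⟩

/-- The inclusion of order complexes induced by `S ⊆ T`. -/
def ΔIncl {P : Type} [Preorder P] {S T : Set P} (h : S ⊆ T) : C(ΔSp S, ΔSp T) :=
  ⟨Set.inclusion (ocSet_mono h), continuous_inclusion (ocSet_mono h)⟩

section complex
variable {P : Type} [Fintype P] [PartialOrder P] {S T : Set P}

lemma pushf_mem {φ : P → P} (hφ : Monotone φ) (hmap : ∀ x ∈ S, φ x ∈ T)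
    {f : P → ℝ} (hf : f ∈ ocSet P S) : pushf φ f ∈ ocSet P T := by
  obtain ⟨h0, -, h1, hS, hC⟩ := hf
  refine ⟨pushf_nonneg h0, Set.toFinite _, ?_, ?_, ?_⟩
  · rw [finsum_eq_sum_of_fintype, sum_pushf, ← finsum_eq_sum_of_fintype]; exact h1
  · exact support_pushf_subset.trans (by
      rintro y ⟨x, hx, rfl⟩; exact hmap x (hS hx))
  · refine (IsChain.image_of_map_rel _ _ _ (fun a b hab => hφ hab) hC).mono support_pushf_subset
end complex

section complex2
variable {P : Type} [Fintype P] [PartialOrder P] {S T : Set P}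

/-- The simplicial map on order complexes induced by a monotone vertex map. -/
noncomputable def Δpush (φ : P → P) (hφ : Monotone φ) (hmap : ∀ x ∈ S, φ x ∈ T) :
    C(ΔSp S, ΔSp T) :=
  ⟨fun f => ⟨pushf φ f.1, pushf_mem hφ hmap f.2⟩,
    Continuous.subtype_mk (continuous_pushf.comp continuous_subtype_val) _⟩

lemma Δpush_apply (φ : P → P) (hφ : Monotone φ) (hmap : ∀ x ∈ S, φ x ∈ T) (f : ΔSp S) :
    ((Δpush φ hφ hmap f : ΔSp T) : P → ℝ) = pushf φ f.1 := rfl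

/-- straight-line homotopy between contiguous simplicial maps -/
lemma homotopic_of_contiguous (φ ψ : P → P) (hφ : Monotone φ) (hψ : Monotone ψ)
    (hφS : ∀ x ∈ S, φ x ∈ S) (hψS : ∀ x ∈ S, ψ x ∈ S)
    (hcont : ∀ C : Set P, C ⊆ S → IsChain (· ≤ ·) C →
      IsChain (· ≤ ·) (φ '' C ∪ ψ '' C)) :
    (Δpush φ hφ hφS).Homotopic (Δpush ψ hψ hψS) := by
  have mem : ∀ (t : unitInterval) (f : ΔSp S),
      (fun y => (1 - (t : ℝ)) * pushf φ f.1 y + (t : ℝ) * pushf ψ f.1 y) ∈ ocSet P S := by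
    intro t f
    obtain ⟨h0, -, h1, hS, hC⟩ := f.2
    have hsub : Function.support
        (fun y => (1 - (t : ℝ)) * pushf φ f.1 y + (t : ℝ) * pushf ψ f.1 y) ⊆
        φ '' Function.support f.1 ∪ ψ '' Function.support f.1 := by
      intro y hy
      by_cases h1' : pushf φ f.1 y = 0
      · by_cases h2' : pushf ψ f.1 y = 0
        · exact absurd (by simp [h1', h2']) hy
        · exact Or.inr (support_pushf_subset h2')
      · exact Or.inl (support_pushf_subset h1')
    refine ⟨?_, Set.toFinite _, ?_, ?_, ?_⟩
    · intro y
      have h1t : (0:ℝ) ≤ 1 - (t : ℝ) := by linarith [t.2.2]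
      exact add_nonneg (mul_nonneg h1t (pushf_nonneg h0 y))
        (mul_nonneg t.2.1 (pushf_nonneg h0 y))
    · rw [finsum_eq_sum_of_fintype, Finset.sum_add_distrib, ← Finset.mul_sum,
        ← Finset.mul_sum, sum_pushf, sum_pushf, ← finsum_eq_sum_of_fintype, h1]
      ring
    · refine hsub.trans ?_
      rintro y (⟨x, hx, rfl⟩ | ⟨x, hx, rfl⟩)
      exacts [hφS x (hS hx), hψS x (hS hx)]
    · exact (hcont _ hS hC).mono hsub
  refine ⟨⟨⟨fun p => ⟨_, mem p.1 p.2⟩, ?_⟩, ?_, ?_⟩⟩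
  · apply Continuous.subtype_mk
    apply continuous_pi
    intro y
    have hφc : Continuous fun p : unitInterval × ΔSp S => pushf φ p.2.1 y :=
      ((continuous_apply y).comp (continuous_pushf.comp continuous_subtype_val)).comp
        continuous_snd
    have hψc : Continuous fun p : unitInterval × ΔSp S => pushf ψ p.2.1 y :=
      ((continuous_apply y).comp (continuous_pushf.comp continuous_subtype_val)).comp
        continuous_snd
    have ht : Continuous fun p : unitInterval × ΔSp S => (p.1 : ℝ) :=
      continuous_subtype_val.comp continuous_fst
    exact ((continuous_const.sub ht).mul hφc).add (ht.mul hψc)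
  · intro f
    apply Subtype.ext
    funext y
    show (1 - (0 : ℝ)) * _ + (0 : ℝ) * _ = _
    simp [Δpush_apply]
  · intro f
    apply Subtype.ext
    funext y
    show (1 - (1 : ℝ)) * _ + (1 : ℝ) * _ = _
    simp [Δpush_apply]

end complex2

section comb
variable {P : Type} [Fintype P] [PartialOrder P] {S T : Set P}

lemma contig_single (φ ψ : P → P) (hφ : Monotone φ) (hψ : Monotone ψ)
    (hle : ∀ x, φ x ≤ ψ x) (p : P) (hdiff : ∀ x, x ≠ p → φ x = ψ x) :
    ∀ C : Set P, C ⊆ S → IsChain (· ≤ ·) C →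
      IsChain (· ≤ ·) (φ '' C ∪ ψ '' C) := by
  intro C _ hC
  -- key comparability fact
  have key : ∀ x ∈ C, ∀ y ∈ C, ∀ u ∈ ({φ x, ψ x} : Set P), ∀ v ∈ ({φ y, ψ y} : Set P),
      u ≤ v ∨ v ≤ u := by
    have main : ∀ x y : P, x ≤ y → ∀ u ∈ ({φ x, ψ x} : Set P), ∀ v ∈ ({φ y, ψ y} : Set P),
        u ≤ v ∨ v ≤ u := by
      intro x y hxy u hu v hv
      rcases hu with rfl | rfl <;> rcases hv with rfl | rfl
      · exact Or.inl (hφ hxy)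
      · exact Or.inl ((hφ hxy).trans (hle y))
      · -- ψ x vs φ y
        by_cases hx : x = p
        · by_cases hy : y = p
          · rw [hx, hy]; exact Or.inr (hle p)
          · rw [hdiff y hy]; exact Or.inl (hψ hxy)
        · rw [← hdiff x hx]; exact Or.inl (hφ hxy)
      · exact Or.inl (hψ hxy)
    intro x hx y hy u hu v hv
    rcases eq_or_ne x y with rfl | hne
    · exact main x x le_rfl u hu v hv
    · rcases hC hx hy hne with h | h
      · exact main x y h u hu v hv
      · exact (main y x h v hv u hu).symm
  intro a ha b hb _
  have gm : ∀ w ∈ φ '' C ∪ ψ '' C, ∃ x ∈ C, w ∈ ({φ x, ψ x} : Set P) := by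
    rintro w (⟨x, hx, rfl⟩ | ⟨x, hx, rfl⟩)
    · exact ⟨x, hx, Or.inl rfl⟩
    · exact ⟨x, hx, Or.inr rfl⟩
  obtain ⟨x, hx, hux⟩ := gm a ha
  obtain ⟨y, hy, hvy⟩ := gm b hb
  exact key x hx y hy a hux b hvy

variable [DecidableEq P]

/-- the staged closure map: apply `c` only on `U`. -/
def cU (c : P → P) (U : Finset P) : P → P := fun x => if x ∈ U then c x else x

lemma cU_monotone {c : P → P} (hc : Monotone c) (hle : ∀ x, x ≤ c x)
    {U : Finset P} (hU : ∀ x ∈ U, ∀ y, x ≤ y → y ∈ U) : Monotone (cU c U) := by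
  intro x y hxy
  unfold cU
  by_cases hx : x ∈ U
  · have hy : y ∈ U := hU x hx y hxy
    simp only [hx, hy, if_pos]
    exact hc hxy
  · by_cases hy : y ∈ U
    · simp only [hx, hy, if_pos, if_neg, ite_true, ite_false]
      exact hxy.trans (hle y)
    · simp only [hx, hy, ite_false]
      exact hxy

lemma cU_maps {c : P → P} (hcS : ∀ x ∈ S, c x ∈ S) (U : Finset P) :
    ∀ x ∈ S, cU c U x ∈ S := by
  intro x hx
  unfold cU
  split
  · exact hcS x hx
  · exact hx

end comb

section mainaux
variable {P : Type} [Fintype P] [PartialOrder P] [DecidableEq P] {S T : Set P}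

lemma homotopic_id_of_upper (c : P → P) (hc : Monotone c) (hle : ∀ x, x ≤ c x)
    (hcS : ∀ x ∈ S, c x ∈ S) :
    ∀ (n : ℕ) (U : Finset P) (_ : U.card = n) (hU : ∀ x ∈ U, ∀ y, x ≤ y → y ∈ U),
      (Δpush (cU c U) (cU_monotone hc hle hU) (cU_maps hcS U)).Homotopic
        (ContinuousMap.id (ΔSp S)) := by
  intro n
  induction n with
  | zero =>
    intro U hcard hU
    have hUe : U = ∅ := Finset.card_eq_zero.mp hcard
    subst hUe
    have heq : Δpush (cU c (∅ : Finset P)) (cU_monotone hc hle hU) (cU_maps hcS ∅) =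
        ContinuousMap.id (ΔSp S) := by
      apply ContinuousMap.ext
      intro f
      apply Subtype.ext
      exact pushf_eq_self (fun x _ => by simp [cU])
    rw [heq]
  | succ n ih =>
    intro U hcard hU
    have hne : U.Nonempty := Finset.card_pos.mp (hcard ▸ n.succ_pos)
    obtain ⟨p, hpm⟩ := Finset.exists_minimal hne
    have hpU : p ∈ U := hpm.1
    have hpmin : ∀ x ∈ U, ¬ x < p := fun x hx hlt => hlt.not_ge (hpm.2 hx hlt.le)
    set U' := U.erase p with hU'def
    have hU' : ∀ x ∈ U', ∀ y, x ≤ y → y ∈ U' := by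
      intro x hx y hxy
      obtain ⟨hxp, hxU⟩ := Finset.mem_erase.mp hx
      have hyU : y ∈ U := hU x hxU y hxy
      refine Finset.mem_erase.mpr ⟨?_, hyU⟩
      rintro rfl
      exact hpmin x hxU (lt_of_le_of_ne hxy (fun h => hxp h))
    have hcard' : U'.card = n := by
      rw [hU'def, Finset.card_erase_of_mem hpU, hcard]
      rfl
    have hle' : ∀ x, cU c U' x ≤ cU c U x := by
      intro x
      unfold cU
      by_cases hx : x ∈ U'
      · simp [hx, Finset.mem_of_mem_erase hx]
      · by_cases hxU : x ∈ U
        · simp only [hx, if_neg, ite_false, hxU, if_pos, ite_true]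
          exact hle x
        · simp [hx, hxU]
    have hdiff : ∀ x, x ≠ p → cU c U' x = cU c U x := by
      intro x hxp
      unfold cU
      have : x ∈ U' ↔ x ∈ U := by
        rw [hU'def, Finset.mem_erase]
        exact ⟨fun h => h.2, fun h => ⟨hxp, h⟩⟩
      exact if_congr this rfl rfl
    have h1 : (Δpush (cU c U') (cU_monotone hc hle hU') (cU_maps hcS U')).Homotopic
        (Δpush (cU c U) (cU_monotone hc hle hU) (cU_maps hcS U)) :=
      homotopic_of_contiguous _ _ _ _ _ _
        (contig_single _ _ (cU_monotone hc hle hU') (cU_monotone hc hle hU) hle' p hdiff)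
    exact ((h1.symm).trans (ih U' hcard' hU'))

lemma main_aux (hTS : T ⊆ S) (c : P → P) (hc : Monotone c) (hle : ∀ x, x ≤ c x)
    (hcT : ∀ x ∈ S, c x ∈ T) (hfix : ∀ x ∈ T, c x = x) :
    Nonempty (ContinuousMap.HomotopyEquiv (ΔSp S) (ΔSp T)) := by
  have hcS : ∀ x ∈ S, c x ∈ S := fun x hx => hTS (hcT x hx)
  have hcu : cU c (Finset.univ : Finset P) = c := funext fun x => if_pos (Finset.mem_univ x)
  have hUu : ∀ x ∈ (Finset.univ : Finset P), ∀ y : P, x ≤ y → y ∈ (Finset.univ : Finset P) :=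
    fun _ _ y _ => Finset.mem_univ y
  have hli : ((ΔIncl hTS).comp (Δpush c hc hcT)) =
      Δpush (cU c Finset.univ) (cU_monotone hc hle hUu) (cU_maps hcS Finset.univ) := by
    apply ContinuousMap.ext
    intro f
    apply Subtype.ext
    show pushf c f.1 = pushf (cU c Finset.univ) f.1
    rw [hcu]
  have left : ((ΔIncl hTS).comp (Δpush c hc hcT)).Homotopic (ContinuousMap.id (ΔSp S)) := by
    rw [hli]
    exact homotopic_id_of_upper c hc hle hcS (Finset.univ.card) Finset.univ rfl hUu
  have hri : ((Δpush c hc hcT).comp (ΔIncl hTS)) = ContinuousMap.id (ΔSp T) := by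
    apply ContinuousMap.ext
    intro f
    apply Subtype.ext
    exact pushf_eq_self (fun x hx => hfix x (f.2.2.2.2.1 hx))
  have right : ((Δpush c hc hcT).comp (ΔIncl hTS)).Homotopic (ContinuousMap.id (ΔSp T)) := by
    rw [hri]
  exact ⟨⟨Δpush c hc hcT, ΔIncl hTS, left, right⟩⟩

end mainaux

/-- Let `L` be the proper part of a finite lattice `𝓛`, and `M` the set of all
elements `x ∈ L` that are meets of nonempty sets of maximal elements of `L`. If `R` is the
proper part of a sublattice of `𝓛` with `M ⊆ R ⊆ L`, then `ΔL ≃ ΔR`. -/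
theorem orderComplex_homotopyEquiv_of_properPart_sublattice
    (𝓛 : Type) [Lattice 𝓛] [Finite 𝓛] [BoundedOrder 𝓛]
    (L : Set 𝓛) (hL : L = {x | x ≠ ⊥ ∧ x ≠ ⊤})
    (M : Set 𝓛)
    (hM : M = {x | x ∈ L ∧ ∃ C : Finset 𝓛, C.Nonempty ∧
      (∀ c ∈ C, c ∈ L ∧ ∀ y ∈ L, ¬ c < y) ∧ x = C.inf id})
    (R : Set 𝓛) (S : Sublattice 𝓛) (hbot : ⊥ ∈ S) (htop : ⊤ ∈ S)
    (hR : R = (S : Set 𝓛) \ {⊥, ⊤})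
    (hMR : M ⊆ R) (hRL : R ⊆ L) :
    Nonempty (ContinuousMap.HomotopyEquiv (ΔSp L) (ΔSp R)) := by
  classical
  have : Fintype 𝓛 := Fintype.ofFinite 𝓛
  -- the closure operator: meet of all maximal elements of `L` above `x`
  set c : 𝓛 → 𝓛 := fun x =>
    (Finset.univ.filter (fun m => (m ∈ L ∧ ∀ y ∈ L, ¬ m < y) ∧ x ≤ m)).inf id with hcdef
  have hc : Monotone c := by
    intro x y hxy
    apply Finset.inf_mono
    intro m hm
    rw [Finset.mem_filter] at hm ⊢
    exact ⟨hm.1, hm.2.1, hxy.trans hm.2.2⟩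
  have hle : ∀ x, x ≤ c x := by
    intro x
    apply Finset.le_inf
    intro m hm
    exact (Finset.mem_filter.mp hm).2.2
  have hmaxex : ∀ x ∈ L, ∃ m, (m ∈ L ∧ ∀ y ∈ L, ¬ m < y) ∧ x ≤ m := by
    intro x hx
    obtain ⟨m, hmm⟩ := Finset.exists_maximal (s := (Finset.univ.filter (fun y => y ∈ L ∧ x ≤ y)))
      ⟨x, Finset.mem_filter.mpr ⟨Finset.mem_univ x, hx, le_rfl⟩⟩
    have hm : m ∈ Finset.univ.filter (fun y => y ∈ L ∧ x ≤ y) := hmm.1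
    have hmax : ∀ y ∈ Finset.univ.filter (fun y => y ∈ L ∧ x ≤ y), ¬ m < y :=
      fun y hy hlt => hlt.not_ge (hmm.2 hy hlt.le)
    rw [Finset.mem_filter] at hm
    refine ⟨m, ⟨hm.2.1, ?_⟩, hm.2.2⟩
    intro y hy hlt
    exact hmax y (Finset.mem_filter.mpr ⟨Finset.mem_univ y, hy, hm.2.2.trans hlt.le⟩) hlt
  have hcM : ∀ x ∈ L, c x ∈ M := by
    intro x hx
    obtain ⟨m, hmmax, hxm⟩ := hmaxex x hx
    have hmC : m ∈ Finset.univ.filter (fun m => (m ∈ L ∧ ∀ y ∈ L, ¬ m < y) ∧ x ≤ m) :=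
      Finset.mem_filter.mpr ⟨Finset.mem_univ m, hmmax, hxm⟩
    have hcxm : c x ≤ m := Finset.inf_le hmC
    have hcxL : c x ∈ L := by
      rw [hL]
      constructor
      · intro hbot'
        have : x = ⊥ := le_bot_iff.mp (hbot' ▸ hle x)
        exact (hL ▸ hx).1 this
      · intro htop'
        have : m = ⊤ := top_le_iff.mp (htop' ▸ hcxm)
        exact (hL ▸ hmmax.1).2 this
    rw [hM]
    refine ⟨hcxL, Finset.univ.filter (fun m => (m ∈ L ∧ ∀ y ∈ L, ¬ m < y) ∧ x ≤ m),
      ⟨m, hmC⟩, ?_, rfl⟩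
    intro c' hc'
    exact (Finset.mem_filter.mp hc').2.1
  have hfix : ∀ x ∈ M, c x = x := by
    intro x hx
    rw [hM] at hx
    obtain ⟨hxL, C, hCne, hCmax, hxeq⟩ := hx
    refine le_antisymm ?_ (hle x)
    have hsub : ∀ b ∈ C, c x ≤ b := by
      intro b hb
      refine Finset.inf_le (Finset.mem_filter.mpr ⟨Finset.mem_univ b, hCmax b hb, ?_⟩)
      rw [hxeq]
      exact Finset.inf_le hb
    exact le_of_le_of_eq (Finset.le_inf hsub) hxeq.symm
  have hML : M ⊆ L := by
    rw [hM]; exact fun x hx => hx.1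
  obtain ⟨e1⟩ := main_aux hML c hc hle hcM hfix
  obtain ⟨e2⟩ := main_aux hMR c hc hle (fun x hx => hcM x (hRL hx)) hfix
  exact ⟨e1.trans e2.symm⟩
end

section
/- Let P be a finite poset, k ≥ 0, h ∈ P^{k+1}, and X_h = Δ(P^{≤k} ∪ {h}). Then the quotient space X_h / ΔP^{≤k} is homeomorphic to the suspension Σ ΔP_{<h}. -/
/-- The topological join `X * Y`: the double mapping cylinder of `X ← X × I × Y → Y`
(so that `X * ∅ = X` and `∅ * Y = Y`). -/
abbrev TopJoin (X Y : Type) [TopologicalSpace X] [TopologicalSpace Y] : Type :=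
  Quot (fun a b : (X ⊕ (X × unitInterval × Y)) ⊕ Y =>
    (∃ x y, a = Sum.inl (Sum.inr (x, 0, y)) ∧ b = Sum.inl (Sum.inl x)) ∨
    (∃ x y, a = Sum.inl (Sum.inr (x, 1, y)) ∧ b = Sum.inr y))

/-- The (unreduced) suspension `Σ X = S⁰ * X`. -/
abbrev Susp (X : Type) [TopologicalSpace X] : Type := TopJoin Bool X

/-- The wedge (one-point union) of two pointed spaces. -/
abbrev Wedge (X Y : Type) [TopologicalSpace X] [TopologicalSpace Y] (x0 : X) (y0 : Y) : Type :=
  Quot (fun a b : X ⊕ Y => a = Sum.inl x0 ∧ b = Sum.inr y0)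

/-- The wedge of a family of pointed spaces (with an auxiliary base point glued to all the
base points of the family, so that the empty wedge is a one-point space). -/
abbrev BigWedge {ι : Type} (X : ι → Type) [∀ i, TopologicalSpace (X i)] (pt : ∀ i, X i) : Type :=
  Quot (fun a b : (Σ i, X i) ⊕ Unit => (∃ i, a = Sum.inl ⟨i, pt i⟩) ∧ b = Sum.inr ())

/-- The base point of a wedge of a family. -/
def BigWedge.base {ι : Type} {X : ι → Type} [∀ i, TopologicalSpace (X i)] {pt : ∀ i, X i} :
    BigWedge X pt :=
  Quot.mk _ (Sum.inr ())
/-- The quotient space `X/A` (based: an external base point is glued to all points of `A`). -/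
abbrev QuotBy (X : Type) [TopologicalSpace X] (A : Set X) : Type :=
  Quot (fun a b : X ⊕ Unit => (∃ x ∈ A, a = Sum.inl x) ∧ b = Sum.inr ())
/-- `P^{≤ k}`: elements of height at most `k` (i.e. every chain `x₀ < … < x_{k'-1} < h`
has `k' ≤ k`). -/
def levelLE (P : Type) [PartialOrder P] (k : ℕ) : Set P :=
  {x | Order.height x ≤ (k : ℕ∞)}

/-- The `k`-th level `P^k = P^{≤k} \ P^{≤k-1}`: elements of height exactly `k`. -/
def level (P : Type) [PartialOrder P] (k : ℕ) : Set P :=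
  {x | Order.height x = (k : ℕ∞)}

section Compactness
variable {P : Type} [Preorder P] [Finite P]

omit [Finite P] in
lemma ocSet_sum_eq {S : Set P} {f : P → ℝ} (hf : f ∈ ocSet P S) [Fintype P] :
    ∑ x, f x = 1 := by
  have := hf.2.2.1
  rwa [finsum_eq_sum_of_fintype] at this

lemma ocSet_le_one {S : Set P} {f : P → ℝ} (hf : f ∈ ocSet P S) (x : P) : f x ≤ 1 := by
  cases nonempty_fintype P
  have h1 := ocSet_sum_eq hf
  calc f x ≤ ∑ y, f y := Finset.single_le_sum (fun y _ => hf.1 y) (Finset.mem_univ x)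
  _ = 1 := h1

lemma ocSet_isClosed (S : Set P) : IsClosed (ocSet P S) := by
  cases nonempty_fintype P
  have : ocSet P S =
      {f : P → ℝ | ∀ x, 0 ≤ f x} ∩ {f : P → ℝ | ∑ x, f x = 1} ∩
      (⋂ (x) (_ : x ∉ S), {f : P → ℝ | f x = 0}) ∩
      ⋂ (x) (y) (_ : ¬ x ≤ y) (_ : ¬ y ≤ x), {f : P → ℝ | f x * f y = 0} := by
    ext f
    simp only [ocSet, Set.mem_setOf_eq, Set.mem_inter_iff, Set.mem_iInter]
    constructor
    · rintro ⟨h0, -, hsum, hsupp, hchain⟩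
      rw [finsum_eq_sum_of_fintype] at hsum
      refine ⟨⟨⟨h0, hsum⟩, fun x hx => ?_⟩, fun x y hxy hyx => ?_⟩
      · by_contra hfx
        exact hx (hsupp hfx)
      · by_contra hne
        have hx : f x ≠ 0 := fun h => hne (by rw [h, zero_mul])
        have hy : f y ≠ 0 := fun h => hne (by rw [h, mul_zero])
        have hxy' : x ≠ y := fun h => hxy (h ▸ le_refl x)
        rcases hchain hx hy hxy' with h | h
        · exact hxy h
        · exact hyx h
    · rintro ⟨⟨⟨h0, hsum⟩, hS⟩, hch⟩
      refine ⟨h0, Set.toFinite _, by rw [finsum_eq_sum_of_fintype]; exact hsum,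
        fun x hx => ?_, fun x hx y hy hne => ?_⟩
      · by_contra hxS
        exact hx (hS x hxS)
      · by_contra hcomp
        rw [not_or] at hcomp
        rcases mul_eq_zero.mp (hch x y hcomp.1 hcomp.2) with h | h
        · exact hx h
        · exact hy h
  rw [this]
  refine IsClosed.inter (IsClosed.inter (IsClosed.inter ?_ ?_) ?_) ?_
  · have : {f : P → ℝ | ∀ x, 0 ≤ f x} = ⋂ x, {f : P → ℝ | 0 ≤ f x} := by
      ext f; simp
    rw [this]
    exact isClosed_iInter fun x => isClosed_le continuous_const (continuous_apply x)
  · exact isClosed_eq (by continuity) continuous_const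
  · exact isClosed_iInter fun x => isClosed_iInter fun _ =>
      isClosed_eq (continuous_apply x) continuous_const
  · exact isClosed_iInter fun x => isClosed_iInter fun y => isClosed_iInter fun _ =>
      isClosed_iInter fun _ =>
        isClosed_eq ((continuous_apply x).mul (continuous_apply y)) continuous_const

lemma ocSet_isCompact (S : Set P) : IsCompact (ocSet P S) := by
  refine IsCompact.of_isClosed_subset
    (isCompact_univ_pi fun _ => isCompact_Icc (a := (0:ℝ)) (b := 1)) (ocSet_isClosed S) ?_
  intro f hf
  exact fun x _ => Set.mem_Icc.mpr ⟨hf.1 x, ocSet_le_one hf x⟩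

instance ΔSp.compactSpace (S : Set P) : CompactSpace (ΔSp S) :=
  isCompact_iff_compactSpace.mp (ocSet_isCompact S)

end Compactness

namespace Nadstrojka

variable {Q : Type}

/-- The model point `(u, u(1-u)·w)` in `ℝ × (Q → ℝ)`. -/
noncomputable def mpt (u : ℝ) (w : Q → ℝ) : ℝ × (Q → ℝ) := (u, (u * (1 - u)) • w)

lemma mpt_fst (u : ℝ) (w : Q → ℝ) : (mpt u w).1 = u := rfl

lemma mpt_inj {u u' : ℝ} {w w' : Q → ℝ} (heq : mpt u w = mpt u' w') :
    u = u' ∧ (u * (1 - u) ≠ 0 → w = w') := by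
  have h1 : u = u' := congrArg Prod.fst heq
  subst h1
  refine ⟨rfl, fun hc => ?_⟩
  have h2 : (u * (1 - u)) • w = (u * (1 - u)) • w' := congrArg Prod.snd heq
  exact smul_right_injective (Q → ℝ) hc h2

/-- The model of the suspension of `Y` as a subset of `ℝ × (Q → ℝ)`. -/
def MY (Y : Set (Q → ℝ)) : Set (ℝ × (Q → ℝ)) :=
  {p | ∃ u : ℝ, ∃ w ∈ Y, 0 ≤ u ∧ u ≤ 1 ∧ p = mpt u w}

noncomputable def ub (b : Bool) (s : ℝ) : ℝ := (cond b 1 0) + (1 - 2 * cond b 1 0) * (s / 2)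

lemma ub_true (s : ℝ) : ub true s = 1 - s / 2 := by simp [ub]; ring
lemma ub_false (s : ℝ) : ub false s = s / 2 := by simp [ub]

lemma ub_mem {b : Bool} {s : ℝ} (h0 : 0 ≤ s) (h1 : s ≤ 1) : 0 ≤ ub b s ∧ ub b s ≤ 1 := by
  cases b
  · rw [ub_false]; constructor <;> linarith
  · rw [ub_true]; constructor <;> linarith

noncomputable def suspMap (Y : Set (Q → ℝ)) :
    (Bool ⊕ Bool × unitInterval × ↥Y) ⊕ ↥Y → ℝ × (Q → ℝ) :=
  Sum.elim
    (Sum.elim (fun b => mpt (cond b 1 0) 0)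
      (fun p => mpt (ub p.1 (p.2.1 : ℝ)) (p.2.2 : Q → ℝ)))
    (fun y => mpt (1 / 2) (y : Q → ℝ))

lemma suspMap_rel (Y : Set (Q → ℝ)) : ∀ a b,
    ((∃ x y, a = Sum.inl (Sum.inr (x, 0, y)) ∧ b = Sum.inl (Sum.inl x)) ∨
      (∃ x y, a = Sum.inl (Sum.inr (x, 1, y)) ∧ b = Sum.inr y)) →
    suspMap Y a = suspMap Y b := by
  rintro a b (⟨x, y, rfl, rfl⟩ | ⟨x, y, rfl, rfl⟩) <;> cases x <;>
    simp [suspMap, ub_true, ub_false, mpt] <;> norm_num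

lemma continuous_suspMap (Y : Set (Q → ℝ)) : Continuous (suspMap Y) := by
  have hmpt : Continuous fun p : ℝ × (Q → ℝ) => mpt p.1 p.2 := by
    unfold mpt
    exact continuous_fst.prodMk ((continuous_fst.mul
      (continuous_const.sub continuous_fst)).smul continuous_snd)
  refine Continuous.sumElim (Continuous.sumElim ?_ ?_) ?_
  · exact continuous_of_discreteTopology
  · have hc : Continuous fun p : Bool × unitInterval × ↥Y => (cond p.1 (1:ℝ) 0) := by
      have hb : Continuous (fun b : Bool => (cond b (1:ℝ) 0)) := continuous_of_discreteTopology
      exact hb.comp continuous_fst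
    have hs : Continuous fun p : Bool × unitInterval × ↥Y => (p.2.1 : ℝ) :=
      continuous_subtype_val.comp (continuous_fst.comp continuous_snd)
    have hy : Continuous fun p : Bool × unitInterval × ↥Y => (p.2.2 : Q → ℝ) :=
      continuous_subtype_val.comp (continuous_snd.comp continuous_snd)
    have hu : Continuous fun p : Bool × unitInterval × ↥Y => ub p.1 (p.2.1 : ℝ) := by
      unfold ub
      exact hc.add ((continuous_const.sub (continuous_const.mul hc)).mul
        (hs.div_const 2))
    exact hmpt.comp (hu.prodMk hy)
  · exact hmpt.comp ((continuous_const (y := (1/2 : ℝ))).prodMk continuous_subtype_val)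

end Nadstrojka

namespace Nadstrojka

variable {Q : Type}

open Classical in
noncomputable def suspInv (Y : Set (Q → ℝ)) : ℝ × (Q → ℝ) → Susp ↥Y := fun p =>
  if hT : ∃ (s : unitInterval) (y : ↥Y), (s : ℝ) ≠ 0 ∧ p = mpt (ub true s) y then
    Quot.mk _ (Sum.inl (Sum.inr (true, hT.choose, hT.choose_spec.choose)))
  else if hF : ∃ (s : unitInterval) (y : ↥Y),
      (s : ℝ) ≠ 0 ∧ (s : ℝ) ≠ 1 ∧ p = mpt (ub false s) y then
    Quot.mk _ (Sum.inl (Sum.inr (false, hF.choose, hF.choose_spec.choose)))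
  else if p.1 = 1 then Quot.mk _ (Sum.inl (Sum.inl true))
  else Quot.mk _ (Sum.inl (Sum.inl false))

lemma not_GT {Y : Set (Q → ℝ)} {p : ℝ × (Q → ℝ)} (h : p.1 < 1 / 2 ∨ p.1 = 1) :
    ¬ ∃ (s : unitInterval) (y : ↥Y), (s : ℝ) ≠ 0 ∧ p = mpt (ub true s) y := by
  rintro ⟨s, y, hs, rfl⟩
  rw [mpt_fst, ub_true] at h
  have hs1 : (s : ℝ) ≤ 1 := s.2.2
  have hs0 : 0 ≤ (s : ℝ) := s.2.1
  rcases h with h | h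
  · linarith
  · exact hs (by linarith)

lemma not_GF {Y : Set (Q → ℝ)} {p : ℝ × (Q → ℝ)} (h : 1 / 2 ≤ p.1 ∨ p.1 = 0) :
    ¬ ∃ (s : unitInterval) (y : ↥Y),
      (s : ℝ) ≠ 0 ∧ (s : ℝ) ≠ 1 ∧ p = mpt (ub false s) y := by
  rintro ⟨s, y, hs0, hs1, rfl⟩
  rw [mpt_fst, ub_false] at h
  have h1 : (s : ℝ) ≤ 1 := s.2.2
  have h0 : 0 ≤ (s : ℝ) := s.2.1
  rcases h with h | h
  · exact hs1 (by linarith)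
  · exact hs0 (by linarith)

lemma suspInv_eval_T {Y : Set (Q → ℝ)} {p : ℝ × (Q → ℝ)} {s : unitInterval} {y : ↥Y}
    (hs : (s : ℝ) ≠ 0) (hp : p = mpt (ub true s) y) :
    suspInv Y p = Quot.mk _ (Sum.inl (Sum.inr (true, s, y))) := by
  have hT : ∃ (s : unitInterval) (y : ↥Y), (s : ℝ) ≠ 0 ∧ p = mpt (ub true s) y :=
    ⟨s, y, hs, hp⟩
  rw [suspInv, dif_pos hT]
  obtain ⟨hs0, hp0⟩ := hT.choose_spec.choose_spec
  have heq := mpt_inj (hp0.symm.trans hp)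
  have hu : ub true (hT.choose : ℝ) = ub true (s : ℝ) := heq.1
  rw [ub_true, ub_true] at hu
  have hss : (hT.choose : ℝ) = (s : ℝ) := by linarith
  have hsub : hT.choose = s := Subtype.ext hss
  have hy : hT.choose_spec.choose = y := by
    have h1 : (s : ℝ) ≤ 1 := s.2.2
    have h0 : 0 ≤ (s : ℝ) := s.2.1
    have hne : ub true (s : ℝ) * (1 - ub true (s : ℝ)) ≠ 0 := by
      rw [ub_true]
      have hslt : 0 < (s : ℝ) := lt_of_le_of_ne h0 (Ne.symm hs)
      have : 0 < 1 - (s : ℝ) / 2 := by linarith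
      have : 0 < (1 - (s : ℝ) / 2) * ((s : ℝ) / 2) := by positivity
      intro hc
      rw [show (1 : ℝ) - (1 - (s:ℝ)/2) = (s:ℝ)/2 by ring] at hc
      nlinarith
    have hne' : ub true (hT.choose : ℝ) * (1 - ub true (hT.choose : ℝ)) ≠ 0 := by
      rw [hss]; exact hne
    exact Subtype.ext (heq.2 hne')
  rw [hy, hsub]

lemma suspInv_eval_F {Y : Set (Q → ℝ)} {p : ℝ × (Q → ℝ)} {s : unitInterval} {y : ↥Y}
    (hs0 : (s : ℝ) ≠ 0) (hs1 : (s : ℝ) ≠ 1) (hp : p = mpt (ub false s) y) :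
    suspInv Y p = Quot.mk _ (Sum.inl (Sum.inr (false, s, y))) := by
  have h1 : (s : ℝ) ≤ 1 := s.2.2
  have h0 : 0 ≤ (s : ℝ) := s.2.1
  have hnT : ¬ ∃ (s' : unitInterval) (y' : ↥Y), (s' : ℝ) ≠ 0 ∧ p = mpt (ub true s') y' := by
    apply not_GT
    left
    rw [hp, mpt_fst, ub_false]
    have : (s : ℝ) < 1 := lt_of_le_of_ne h1 hs1
    linarith
  have hF : ∃ (s : unitInterval) (y : ↥Y), (s : ℝ) ≠ 0 ∧ (s : ℝ) ≠ 1 ∧ p = mpt (ub false s) y :=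
    ⟨s, y, hs0, hs1, hp⟩
  rw [suspInv, dif_neg hnT, dif_pos hF]
  obtain ⟨hs0', hs1', hp0⟩ := hF.choose_spec.choose_spec
  have heq := mpt_inj (hp0.symm.trans hp)
  have hu : ub false (hF.choose : ℝ) = ub false (s : ℝ) := heq.1
  rw [ub_false, ub_false] at hu
  have hss : (hF.choose : ℝ) = (s : ℝ) := by linarith
  have hsub : hF.choose = s := Subtype.ext hss
  have hy : hF.choose_spec.choose = y := by
    have hne : ub false (s : ℝ) * (1 - ub false (s : ℝ)) ≠ 0 := by
      rw [ub_false]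
      have hslt : 0 < (s : ℝ) := lt_of_le_of_ne h0 (Ne.symm hs0)
      have hlt : (s : ℝ) < 1 := lt_of_le_of_ne h1 hs1
      have : 0 < (s : ℝ) / 2 * (1 - (s : ℝ) / 2) := by nlinarith
      nlinarith
    have hne' : ub false (hF.choose : ℝ) * (1 - ub false (hF.choose : ℝ)) ≠ 0 := by
      rw [hss]; exact hne
    exact Subtype.ext (heq.2 hne')
  rw [hy, hsub]

end Nadstrojka

namespace Nadstrojka

variable {Q : Type}

lemma unit_one_ne_zero : ((1 : unitInterval) : ℝ) ≠ 0 := by norm_num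

lemma suspInv_suspMap (Y : Set (Q → ℝ)) (a : (Bool ⊕ Bool × unitInterval × ↥Y) ⊕ ↥Y) :
    suspInv Y (suspMap Y a) = Quot.mk _ a := by
  rcases a with ((b | ⟨b, s, y⟩) | y)
  · -- apex b
    cases b
    · -- false apex : p = mpt 0 0, p.1 = 0
      rw [suspInv, dif_neg (not_GT (Or.inl (by norm_num [suspMap, mpt]))),
        dif_neg (not_GF (Or.inr (by norm_num [suspMap, mpt]))),
        if_neg (by norm_num [suspMap, mpt])]
    · rw [suspInv, dif_neg (not_GT (Or.inr (by norm_num [suspMap, mpt]))),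
        dif_neg (not_GF (Or.inl (by norm_num [suspMap, mpt]))),
        if_pos (by norm_num [suspMap, mpt])]
  · by_cases hs0 : (s : ℝ) = 0
    · -- s = 0 : relation to apex b
      have hs : s = (0 : unitInterval) := Subtype.ext (by rw [hs0]; norm_num)
      subst hs
      have hrel : Quot.mk _ (Sum.inl (Sum.inr (b, (0:unitInterval), y)))
          = (Quot.mk _ (Sum.inl (Sum.inl b)) : Susp ↥Y) :=
        Quot.sound (Or.inl ⟨b, y, rfl, rfl⟩)
      rw [hrel]
      have hmap : suspMap Y (Sum.inl (Sum.inr (b, (0:unitInterval), y)))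
          = suspMap Y (Sum.inl (Sum.inl b)) :=
        suspMap_rel Y _ _ (Or.inl ⟨b, y, rfl, rfl⟩)
      rw [hmap]
      cases b
      · rw [suspInv, dif_neg (not_GT (Or.inl (by norm_num [suspMap, mpt]))),
          dif_neg (not_GF (Or.inr (by norm_num [suspMap, mpt]))),
          if_neg (by norm_num [suspMap, mpt])]
      · rw [suspInv, dif_neg (not_GT (Or.inr (by norm_num [suspMap, mpt]))),
          dif_neg (not_GF (Or.inl (by norm_num [suspMap, mpt]))),
          if_pos (by norm_num [suspMap, mpt])]
    · cases b
      · -- false side, s ≠ 0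
        by_cases hs1 : (s : ℝ) = 1
        · -- s = 1 : p = mpt (1/2) y, use true eval with s' = 1
          have hp : suspMap Y (Sum.inl (Sum.inr (false, s, y)))
              = mpt (ub true ((1 : unitInterval) : ℝ)) (y : Q → ℝ) := by
            show mpt (ub false (s : ℝ)) (y : Q → ℝ) = _
            rw [hs1, ub_false, ub_true]
            norm_num
          rw [suspInv_eval_T unit_one_ne_zero hp]
          have hs' : s = (1 : unitInterval) := Subtype.ext (by rw [hs1]; norm_num)
          subst hs'
          have h1 : Quot.mk _ (Sum.inl (Sum.inr (true, (1:unitInterval), y)))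
              = (Quot.mk _ (Sum.inr y) : Susp ↥Y) :=
            Quot.sound (Or.inr ⟨true, y, rfl, rfl⟩)
          have h2 : Quot.mk _ (Sum.inl (Sum.inr (false, (1:unitInterval), y)))
              = (Quot.mk _ (Sum.inr y) : Susp ↥Y) :=
            Quot.sound (Or.inr ⟨false, y, rfl, rfl⟩)
          rw [h1, h2]
        · exact suspInv_eval_F hs0 hs1 rfl
      · exact suspInv_eval_T hs0 rfl
  · -- equator point y : p = mpt (1/2) y
    have hp : suspMap Y (Sum.inr y) = mpt (ub true ((1 : unitInterval) : ℝ)) (y : Q → ℝ) := by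
      show mpt (1 / 2) (y : Q → ℝ) = _
      rw [ub_true]; norm_num
    rw [suspInv_eval_T unit_one_ne_zero hp]
    exact Quot.sound (Or.inr ⟨true, y, rfl, rfl⟩)

lemma suspMap_mem (Y : Set (Q → ℝ)) [Nonempty ↥Y]
    (a : (Bool ⊕ Bool × unitInterval × ↥Y) ⊕ ↥Y) : suspMap Y a ∈ MY Y := by
  obtain ⟨w₀, hw₀⟩ := (inferInstance : Nonempty ↥Y)
  rcases a with ((b | ⟨b, s, y⟩) | y)
  · refine ⟨cond b 1 0, w₀, hw₀, ?_, ?_, ?_⟩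
    · cases b <;> norm_num
    · cases b <;> norm_num
    · show mpt (cond b 1 0) 0 = _
      unfold mpt
      cases b <;> norm_num
  · exact ⟨ub b (s : ℝ), y, y.2, (ub_mem s.2.1 s.2.2).1, (ub_mem s.2.1 s.2.2).2, rfl⟩
  · exact ⟨1 / 2, y, y.2, by norm_num, by norm_num, rfl⟩

lemma suspMap_surj (Y : Set (Q → ℝ)) {p : ℝ × (Q → ℝ)} (hp : p ∈ MY Y) :
    ∃ a, suspMap Y a = p := by
  obtain ⟨u, w, hw, h0, h1, rfl⟩ := hp
  by_cases hu : u ≤ 1 / 2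
  · refine ⟨Sum.inl (Sum.inr (false, ⟨2 * u, by constructor <;> linarith⟩, ⟨w, hw⟩)), ?_⟩
    show mpt (ub false (2 * u)) w = mpt u w
    rw [ub_false]; norm_num
  · refine ⟨Sum.inl (Sum.inr (true, ⟨2 * (1 - u), by constructor <;> linarith⟩, ⟨w, hw⟩)), ?_⟩
    show mpt (ub true (2 * (1 - u))) w = mpt u w
    rw [ub_true]; ring_nf

noncomputable def suspModelEquiv (Y : Set (Q → ℝ)) [Nonempty ↥Y] : Susp ↥Y ≃ ↥(MY Y) := by
  refine Equiv.ofBijective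
    (fun q => ⟨Quot.lift (suspMap Y) (suspMap_rel Y) q, ?_⟩) ⟨?_, ?_⟩
  · induction q using Quot.ind with
    | _ a => exact suspMap_mem Y a
  · intro q q' hqq
    have hval : Quot.lift (suspMap Y) (suspMap_rel Y) q
        = Quot.lift (suspMap Y) (suspMap_rel Y) q' := congrArg Subtype.val hqq
    have e1 : suspInv Y (Quot.lift (suspMap Y) (suspMap_rel Y) q) = q := by
      induction q using Quot.ind with
      | _ a => exact suspInv_suspMap Y a
    have e2 : suspInv Y (Quot.lift (suspMap Y) (suspMap_rel Y) q') = q' := by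
      induction q' using Quot.ind with
      | _ a => exact suspInv_suspMap Y a
    rw [← e1, ← e2, hval]
  · rintro ⟨p, hp⟩
    obtain ⟨a, ha⟩ := suspMap_surj Y hp
    exact ⟨Quot.mk _ a, Subtype.ext ha⟩

noncomputable def suspModelHomeo (Y : Set (Q → ℝ)) [Nonempty ↥Y] [CompactSpace ↥Y] :
    Susp ↥Y ≃ₜ ↥(MY Y) :=
  Continuous.homeoOfEquivCompactToT2 (f := suspModelEquiv Y)
    (Continuous.codRestrict (continuous_quot_lift _ (continuous_suspMap Y)) _)

end Nadstrojka

namespace Nadstrojka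

section Poset
variable {P : Type} [PartialOrder P] [Finite P] {k : ℕ} {h : P}

omit [Finite P] in
lemma level_height (hh : h ∈ level P (k + 1)) :
    Order.height h = ((k : ℕ∞) + 1) := by
  have : Order.height h = (((k + 1 : ℕ) : ℕ∞)) := hh
  rwa [Nat.cast_add, Nat.cast_one] at this

omit [Finite P] in
lemma hk_lt : (k : ℕ∞) < (k : ℕ∞) + 1 :=
  (ENat.lt_add_one_iff (ENat.coe_ne_top k)).mpr le_rfl

omit [Finite P] in
lemma height_h_lt_top (hh : h ∈ level P (k + 1)) : Order.height h < ⊤ := by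
  rw [level_height hh]
  exact lt_of_lt_of_le (ENat.coe_lt_top (k + 1)) (by push_cast; exact le_rfl)

omit [Finite P] in
lemma h_notin_levelLE (hh : h ∈ level P (k + 1)) : h ∉ levelLE P k := by
  intro hle
  rw [levelLE, Set.mem_setOf_eq, level_height hh] at hle
  exact absurd hle (not_le.mpr hk_lt)

omit [Finite P] in
lemma Iio_sub_levelLE (hh : h ∈ level P (k + 1)) : Set.Iio h ⊆ levelLE P k := by
  intro x hx
  have hfin : Order.height x < ⊤ :=
    lt_of_le_of_lt (Order.height_mono (le_of_lt hx)) (height_h_lt_top hh)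
  have hlt : Order.height x < Order.height h := Order.height_strictMono hx hfin
  rw [level_height hh] at hlt
  exact (ENat.lt_add_one_iff (ENat.coe_ne_top k)).mp hlt

omit [Finite P] in
lemma not_lt_h (hh : h ∈ level P (k + 1)) {x : P} (hx : h < x) : x ∉ levelLE P k := by
  intro hle
  have hlt : Order.height h < Order.height x := Order.height_strictMono hx (height_h_lt_top hh)
  rw [level_height hh] at hlt
  rw [levelLE, Set.mem_setOf_eq] at hle
  exact absurd (le_trans hlt.le hle) (not_le.mpr hk_lt)

end Poset

end Nadstrojka

namespace Nadstrojka

section Poset2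
variable {P : Type} [PartialOrder P] [Finite P] {k : ℕ} {h : P}

/-- Replace the value at `h` by `0`. -/
noncomputable def zout (h : P) (w : P → ℝ) : P → ℝ := by
  classical exact fun x => if x = h then 0 else w x

lemma zout_self (w : P → ℝ) : zout h w h = 0 := by simp [zout]

lemma zout_ne (w : P → ℝ) {x : P} (hx : x ≠ h) : zout h w x = w x := by simp [zout, hx]

omit [Finite P] in
lemma sum_zout [Fintype P] (w : P → ℝ) : ∑ x, zout h w x = (∑ x, w x) - w h := by
  classical
  have hterm : ∀ x : P, zout h w x = w x - (if x = h then w x else 0) := by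
    intro x
    by_cases hx : x = h
    · subst hx; simp [zout_self]
    · simp [zout_ne w hx, hx]
  rw [Finset.sum_congr rfl fun x _ => hterm x, Finset.sum_sub_distrib]
  congr 1
  simp

/-- The subpoints of the standard simplex supported strictly below `h`. -/
lemma support_lt (hh : h ∈ level P (k + 1)) {f : P → ℝ}
    (hf : f ∈ ocSet P (levelLE P k ∪ {h})) (ht : f h ≠ 0) {x : P}
    (hx : f x ≠ 0) (hxh : x ≠ h) : x < h := by
  have hcomp := hf.2.2.2.2 (show x ∈ Function.support f from hx)
    (show h ∈ Function.support f from ht) hxh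
  rcases hcomp with hle | hle
  · exact lt_of_le_of_ne hle hxh
  · exfalso
    have hlt : h < x := lt_of_le_of_ne hle (Ne.symm hxh)
    have hmem : x ∈ levelLE P k ∪ {h} := hf.2.2.2.1 hx
    rcases hmem with hm | hm
    · exact not_lt_h hh hlt hm
    · exact hxh hm

lemma scaled_mem_Iio (hh : h ∈ level P (k + 1)) {f : P → ℝ}
    (hf : f ∈ ocSet P (levelLE P k ∪ {h})) (ht0 : f h ≠ 0) (ht1 : f h ≠ 1) :
    (1 - f h)⁻¹ • zout h f ∈ ocSet P (Set.Iio h) := by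
  cases nonempty_fintype P
  have hle1 : f h ≤ 1 := ocSet_le_one hf h
  have h1t : 0 < 1 - f h := by
    have := lt_of_le_of_ne hle1 ht1
    linarith
  have hsupp : ∀ x, ((1 - f h)⁻¹ • zout h f) x ≠ 0 → f x ≠ 0 ∧ x ≠ h := by
    intro x hx
    by_cases hxh : x = h
    · subst hxh
      rw [Pi.smul_apply, zout_self] at hx
      simp at hx
    · rw [Pi.smul_apply, zout_ne f hxh, smul_eq_mul] at hx
      exact ⟨fun hc => hx (by rw [hc, mul_zero]), hxh⟩
  refine ⟨?_, Set.toFinite _, ?_, ?_, ?_⟩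
  · intro x
    rw [Pi.smul_apply, smul_eq_mul]
    apply mul_nonneg (inv_nonneg.mpr h1t.le)
    by_cases hxh : x = h
    · subst hxh; rw [zout_self]
    · rw [zout_ne f hxh]; exact hf.1 x
  · rw [finsum_eq_sum_of_fintype]
    have : ∑ x, ((1 - f h)⁻¹ • zout h f) x = (1 - f h)⁻¹ * ∑ x, zout h f x := by
      rw [Finset.mul_sum]
      exact Finset.sum_congr rfl fun x _ => by rw [Pi.smul_apply, smul_eq_mul]
    rw [this, sum_zout, ocSet_sum_eq hf]
    field_simp
  · intro x hx
    obtain ⟨hfx, hxh⟩ := hsupp x hx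
    exact support_lt hh hf ht0 hfx hxh
  · intro a ha b hb hne
    obtain ⟨hfa, -⟩ := hsupp a ha
    obtain ⟨hfb, -⟩ := hsupp b hb
    exact hf.2.2.2.2 hfa hfb hne

lemma apex_zero {S : Set P} {f : P → ℝ} (hf : f ∈ ocSet P S) (ht : f h = 1)
    {x : P} (hx : x ≠ h) : f x = 0 := by
  cases nonempty_fintype P
  classical
  have hsum := ocSet_sum_eq hf
  have herase : ∑ y ∈ Finset.univ.erase h, f y = 0 := by
    have := Finset.add_sum_erase Finset.univ f (Finset.mem_univ h)
    rw [ht] at this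
    linarith [this, hsum]
  have := (Finset.sum_eq_zero_iff_of_nonneg
    (fun y _ => hf.1 y)).mp herase
  exact this x (Finset.mem_erase.mpr ⟨hx, Finset.mem_univ x⟩)

lemma mem_A_of_apex_zero {f : P → ℝ} (hf : f ∈ ocSet P (levelLE P k ∪ {h}))
    (ht : f h = 0) : f ∈ ocSet P (levelLE P k) := by
  refine ⟨hf.1, hf.2.1, hf.2.2.1, ?_, hf.2.2.2.2⟩
  intro x hx
  rcases hf.2.2.2.1 hx with h1 | h1
  · exact h1
  · exact absurd (h1 ▸ ht : f x = 0) hx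

lemma apex_of_mem_A (hh : h ∈ level P (k + 1)) {f : P → ℝ}
    (hf : f ∈ ocSet P (levelLE P k)) : f h = 0 := by
  by_contra hne
  exact h_notin_levelLE hh (hf.2.2.2.1 hne)

/-- The convex combination `u·δ_h + (1-u)·w`. -/
noncomputable def mix (h : P) (u : ℝ) (w : P → ℝ) : P → ℝ := by
  classical exact fun x => if x = h then u else (1 - u) * w x

lemma mix_self (u : ℝ) (w : P → ℝ) : mix h u w h = u := by simp [mix]

lemma mix_ne (u : ℝ) (w : P → ℝ) {x : P} (hx : x ≠ h) : mix h u w x = (1 - u) * w x := by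
  simp [mix, hx]

lemma Iio_apex_zero {w : P → ℝ} (hw : w ∈ ocSet P (Set.Iio h)) : w h = 0 := by
  by_contra hne
  exact lt_irrefl h (hw.2.2.2.1 hne)

lemma mix_mem (hh : h ∈ level P (k + 1)) {u : ℝ} (h0 : 0 ≤ u) (h1 : u ≤ 1)
    {w : P → ℝ} (hw : w ∈ ocSet P (Set.Iio h)) :
    mix h u w ∈ ocSet P (levelLE P k ∪ {h}) := by
  cases nonempty_fintype P
  have hwh : w h = 0 := Iio_apex_zero hw
  refine ⟨?_, Set.toFinite _, ?_, ?_, ?_⟩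
  · intro x
    by_cases hx : x = h
    · subst hx; rw [mix_self]; exact h0
    · rw [mix_ne u w hx]
      exact mul_nonneg (by linarith) (hw.1 x)
  · rw [finsum_eq_sum_of_fintype]
    classical
    have hterm : ∀ x : P, mix h u w x = (if x = h then u else 0) + (1 - u) * w x := by
      intro x
      by_cases hx : x = h
      · subst hx; rw [mix_self, hwh]; simp
      · rw [mix_ne u w hx]; simp [hx]
    rw [Finset.sum_congr rfl fun x _ => hterm x, Finset.sum_add_distrib,
      Finset.sum_ite_eq' Finset.univ h (fun _ => u), ← Finset.mul_sum, ocSet_sum_eq hw]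
    simp
  · intro x hx
    by_cases hxh : x = h
    · exact Or.inr hxh
    · left
      rw [Function.mem_support, mix_ne u w hxh] at hx
      have hwx : w x ≠ 0 := fun hc => hx (by rw [hc, mul_zero])
      exact Iio_sub_levelLE hh (hw.2.2.2.1 hwx)
  · intro a ha b hb hne
    have hmem : ∀ x ∈ Function.support (mix h u w), x = h ∨ x < h := by
      intro x hx
      by_cases hxh : x = h
      · exact Or.inl hxh
      · rw [Function.mem_support, mix_ne u w hxh] at hx
        have hwx : w x ≠ 0 := fun hc => hx (by rw [hc, mul_zero])
        exact Or.inr (hw.2.2.2.1 hwx)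
    rcases hmem a ha with h1 | h1 <;> rcases hmem b hb with h2 | h2
    · exact absurd (h1.trans h2.symm) hne
    · right; rw [h1]; exact h2.le
    · left; rw [h2]; exact h1.le
    · have hwa : a ∈ Function.support w := by
        have hxh : a ≠ h := fun hc => absurd (hc ▸ h1) (lt_irrefl h)
        rw [Function.mem_support, mix_ne u w hxh] at ha
        exact fun hc => ha (by rw [hc, mul_zero])
      have hwb : b ∈ Function.support w := by
        have hxh : b ≠ h := fun hc => absurd (hc ▸ h2) (lt_irrefl h)
        rw [Function.mem_support, mix_ne u w hxh] at hb
        exact fun hc => hb (by rw [hc, mul_zero])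
      exact hw.2.2.2.2 hwa hwb hne

end Poset2

end Nadstrojka

namespace Nadstrojka

section Poset3
variable {P : Type} [PartialOrder P] [Finite P] {k : ℕ} {h : P}

noncomputable def qmap (k : ℕ) (h : P) :
    ↥(ocSet P (levelLE P k ∪ {h})) ⊕ Unit → ℝ × (P → ℝ) :=
  Sum.elim (fun f => ((f : P → ℝ) h, (f : P → ℝ) h • zout h (f : P → ℝ)))
    (fun _ => (0, 0))

lemma continuous_qmap : Continuous (qmap k h) := by
  refine Continuous.sumElim ?_ continuous_const
  have heval : Continuous fun f : ↥(ocSet P (levelLE P k ∪ {h})) => (f : P → ℝ) h :=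
    (continuous_apply h).comp continuous_subtype_val
  refine heval.prodMk (heval.smul ?_)
  refine continuous_pi fun x => ?_
  by_cases hx : x = h
  · have : (fun f : ↥(ocSet P (levelLE P k ∪ {h})) => zout h (f : P → ℝ) x)
        = fun _ => (0 : ℝ) := funext fun f => by rw [hx]; exact zout_self _
    rw [this]
    exact continuous_const
  · have : (fun f : ↥(ocSet P (levelLE P k ∪ {h})) => zout h (f : P → ℝ) x)
        = fun f : ↥(ocSet P (levelLE P k ∪ {h})) => (f : P → ℝ) x :=
      funext fun f => zout_ne _ hx
    rw [this]
    exact (continuous_apply x).comp continuous_subtype_val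

lemma qmap_rel (hh : h ∈ level P (k + 1)) : ∀ a b : ↥(ocSet P (levelLE P k ∪ {h})) ⊕ Unit,
    ((∃ x ∈ {f : ΔSp (levelLE P k ∪ {h}) | (f : P → ℝ) ∈ ocSet P (levelLE P k)},
      a = Sum.inl x) ∧ b = Sum.inr ()) → qmap k h a = qmap k h b := by
  rintro a b ⟨⟨x, hx, rfl⟩, rfl⟩
  have hx0 : (x : P → ℝ) h = 0 := apex_of_mem_A hh hx
  show ((x : P → ℝ) h, (x : P → ℝ) h • zout h (x : P → ℝ)) = (0, 0)
  rw [hx0, zero_smul]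

lemma qmap_mem (hh : h ∈ level P (k + 1)) [Nonempty (ΔSp (Set.Iio h))]
    (a : ↥(ocSet P (levelLE P k ∪ {h})) ⊕ Unit) :
    qmap k h a ∈ MY (ocSet P (Set.Iio h)) := by
  obtain ⟨w₀, hw₀⟩ := (inferInstance : Nonempty (ΔSp (Set.Iio h)))
  rcases a with f | u
  · by_cases ht0 : (f : P → ℝ) h = 0
    · refine ⟨0, w₀, hw₀, le_rfl, zero_le_one, ?_⟩
      show ((f : P → ℝ) h, (f : P → ℝ) h • zout h (f : P → ℝ)) = mpt 0 w₀
      rw [ht0, zero_smul]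
      simp [mpt]
    · by_cases ht1 : (f : P → ℝ) h = 1
      · refine ⟨1, w₀, hw₀, zero_le_one, le_rfl, ?_⟩
        show ((f : P → ℝ) h, (f : P → ℝ) h • zout h (f : P → ℝ)) = mpt 1 w₀
        have hz : zout h (f : P → ℝ) = 0 := by
          funext x
          by_cases hx : x = h
          · subst hx; exact zout_self _
          · rw [zout_ne _ hx]
            exact apex_zero f.2 ht1 hx
        rw [ht1, hz, smul_zero]
        simp [mpt]
      · refine ⟨(f : P → ℝ) h, (1 - (f : P → ℝ) h)⁻¹ • zout h (f : P → ℝ),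
          scaled_mem_Iio hh f.2 ht0 ht1, f.2.1 h, ocSet_le_one f.2 h, ?_⟩
        show ((f : P → ℝ) h, (f : P → ℝ) h • zout h (f : P → ℝ)) = _
        unfold mpt
        refine Prod.ext rfl ?_
        show (f : P → ℝ) h • zout h (f : P → ℝ) = _
        rw [smul_smul]
        congr 1
        have h1t : (1 : ℝ) - (f : P → ℝ) h ≠ 0 := sub_ne_zero.mpr (Ne.symm ht1)
        field_simp
  · exact ⟨0, w₀, hw₀, le_rfl, zero_le_one, by simp [qmap, mpt]⟩

lemma quot_mk_A {f : ↥(ocSet P (levelLE P k ∪ {h}))} (hf0 : (f : P → ℝ) h = 0) :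
    (Quot.mk _ (Sum.inl f) : QuotBy (ΔSp (levelLE P k ∪ {h}))
        {g : ΔSp (levelLE P k ∪ {h}) | (g : P → ℝ) ∈ ocSet P (levelLE P k)})
      = Quot.mk _ (Sum.inr ()) :=
  Quot.sound ⟨⟨f, mem_A_of_apex_zero f.2 hf0, rfl⟩, rfl⟩

lemma qmap_inj : ∀ a b : ↥(ocSet P (levelLE P k ∪ {h})) ⊕ Unit,
    qmap k h a = qmap k h b →
    (Quot.mk _ a : QuotBy (ΔSp (levelLE P k ∪ {h}))
        {g : ΔSp (levelLE P k ∪ {h}) | (g : P → ℝ) ∈ ocSet P (levelLE P k)})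
      = Quot.mk _ b := by
  intro a b heq
  rcases a with f | u <;> rcases b with g | v
  · have hfst : (f : P → ℝ) h = (g : P → ℝ) h := congrArg Prod.fst heq
    by_cases ht : (f : P → ℝ) h = 0
    · rw [quot_mk_A ht, quot_mk_A (hfst ▸ ht)]
    · have hsnd : (f : P → ℝ) h • zout h (f : P → ℝ)
          = (g : P → ℝ) h • zout h (g : P → ℝ) := congrArg Prod.snd heq
      have : f = g := by
        apply Subtype.ext
        funext x
        by_cases hx : x = h
        · subst hx; exact hfst
        · have := congrFun hsnd x
          rw [Pi.smul_apply, Pi.smul_apply, zout_ne _ hx, zout_ne _ hx,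
            smul_eq_mul, smul_eq_mul, ← hfst] at this
          exact mul_left_cancel₀ ht this
      rw [this]
  · have hfst : (f : P → ℝ) h = 0 := congrArg Prod.fst heq
    rw [quot_mk_A hfst]
  · have hfst : (g : P → ℝ) h = 0 := (congrArg Prod.fst heq).symm
    rw [quot_mk_A hfst]
  · rfl

lemma qmap_surj (hh : h ∈ level P (k + 1)) {p : ℝ × (P → ℝ)}
    (hp : p ∈ MY (ocSet P (Set.Iio h))) : ∃ a, qmap k h a = p := by
  obtain ⟨u, w, hw, h0, h1, rfl⟩ := hp
  refine ⟨Sum.inl ⟨mix h u w, mix_mem hh h0 h1 hw⟩, ?_⟩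
  have hwh : w h = 0 := Iio_apex_zero hw
  show (mix h u w h, mix h u w h • zout h (mix h u w)) = mpt u w
  rw [mix_self]
  unfold mpt
  refine Prod.ext rfl ?_
  show u • zout h (mix h u w) = (u * (1 - u)) • w
  funext x
  rw [Pi.smul_apply, Pi.smul_apply, smul_eq_mul, smul_eq_mul]
  by_cases hx : x = h
  · subst hx
    rw [zout_self, hwh, mul_zero, mul_zero]
  · rw [zout_ne _ hx, mix_ne u w hx]
    ring

noncomputable def quotModelEquiv (hh : h ∈ level P (k + 1)) [Nonempty (ΔSp (Set.Iio h))] :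
    QuotBy (ΔSp (levelLE P k ∪ {h}))
        {g : ΔSp (levelLE P k ∪ {h}) | (g : P → ℝ) ∈ ocSet P (levelLE P k)}
      ≃ ↥(MY (ocSet P (Set.Iio h))) := by
  refine Equiv.ofBijective
    (fun q => ⟨Quot.lift (qmap k h) (qmap_rel hh) q, ?_⟩) ⟨?_, ?_⟩
  · induction q using Quot.ind with
    | _ a => exact qmap_mem hh a
  · intro q q' hqq
    have hval : Quot.lift (qmap k h) (qmap_rel hh) q
        = Quot.lift (qmap k h) (qmap_rel hh) q' := congrArg Subtype.val hqq
    induction q using Quot.ind with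
    | _ a =>
      induction q' using Quot.ind with
      | _ b => exact qmap_inj a b hval
  · rintro ⟨p, hp⟩
    obtain ⟨a, ha⟩ := qmap_surj hh hp
    exact ⟨Quot.mk _ a, Subtype.ext ha⟩

noncomputable def quotModelHomeo (hh : h ∈ level P (k + 1)) [Nonempty (ΔSp (Set.Iio h))] :
    QuotBy (ΔSp (levelLE P k ∪ {h}))
        {g : ΔSp (levelLE P k ∪ {h}) | (g : P → ℝ) ∈ ocSet P (levelLE P k)}
      ≃ₜ ↥(MY (ocSet P (Set.Iio h))) :=
  Continuous.homeoOfEquivCompactToT2 (f := quotModelEquiv hh)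
    (Continuous.codRestrict (continuous_quot_lift _ continuous_qmap) _)

lemma nonempty_Iio (hh : h ∈ level P (k + 1)) : Nonempty (ΔSp (Set.Iio h)) := by
  classical
  cases nonempty_fintype P
  have hmin : ¬ IsMin h := by
    intro hm
    have h0 : Order.height h = 0 := Order.height_eq_zero.mpr hm
    rw [level_height hh] at h0
    simp at h0
  obtain ⟨x, hx⟩ := not_isMin_iff.mp hmin
  refine ⟨⟨fun z => if z = x then 1 else 0, ?_, Set.toFinite _, ?_, ?_, ?_⟩⟩
  · intro z
    by_cases hz : z = x <;> simp [hz]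
  · rw [finsum_eq_sum_of_fintype]
    simp
  · intro z hz
    have hzx : z = x := by
      by_contra hc
      exact hz (by simp [hc])
    rwa [hzx]
  · intro a ha b hb hne
    have hax : a = x := by
      by_contra hc
      exact ha (by simp [hc])
    have hbx : b = x := by
      by_contra hc
      exact hb (by simp [hc])
    exact absurd (hax.trans hbx.symm) hne

end Poset3

end Nadstrojka

/-- **Lemma `nadstrojka1`.** Let `P` be a finite poset, `k ≥ 0`, `h ∈ P^{k+1}`,
and `X_h = Δ(P^{≤k} ∪ {h})`. Then `X_h / ΔP^{≤k} = Σ ΔP_{<h}`. -/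
theorem quotient_orderComplex_homeo_susp
    (P : Type) [PartialOrder P] [Finite P] (k : ℕ) (h : P)
    (hh : h ∈ level P (k + 1)) :
    Nonempty
      (QuotBy (ΔSp (levelLE P k ∪ {h}))
          {f : ΔSp (levelLE P k ∪ {h}) | (f : P → ℝ) ∈ ocSet P (levelLE P k)} ≃ₜ
        Susp (ΔSp (Set.Iio h))) := by
  haveI : Nonempty (ΔSp (Set.Iio h)) := Nadstrojka.nonempty_Iio hh
  exact ⟨(Nadstrojka.quotModelHomeo hh).trans
    (Nadstrojka.suspModelHomeo (ocSet P (Set.Iio h))).symm⟩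
end

section
/- Let P be a finite poset and k ≥ 0. The quotient space ΔP^{≤k+1} / ΔP^{≤k} is homeomorphic to the wedge of suspensions ⋁_{h ∈ P^{k+1}} Σ ΔP_{<h}. -/
namespace Buket
open scoped Classical
set_option linter.unusedSectionVars false

variable {P : Type} [PartialOrder P] [Fintype P] {k : ℕ}

lemma ocSum {S : Set P} {f : P → ℝ} (hf : f ∈ ocSet P S) : ∑ x : P, f x = 1 := by
  rw [← finsum_eq_sum_of_fintype]; exact hf.2.2.1

lemma oc_le_one {S : Set P} {f : P → ℝ} (hf : f ∈ ocSet P S) (x : P) : f x ≤ 1 := by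
  calc f x ≤ ∑ y : P, f y := Finset.single_le_sum (fun i _ => hf.1 i) (Finset.mem_univ x)
  _ = 1 := ocSum hf

/-- the vertex `h` as a point of the order complex -/
noncomputable def deltaFn (h : P) : P → ℝ := fun x => if x = h then 1 else 0

@[simp] lemma deltaFn_self (h : P) : deltaFn h h = 1 := if_pos rfl

lemma deltaFn_support (h : P) : Function.support (deltaFn h) = {h} := by
  ext x; by_cases hx : x = h <;> simp [Function.mem_support, deltaFn, hx]

lemma eq_delta {S : Set P} {f : P → ℝ} (hf : f ∈ ocSet P S) {h : P} (h1 : f h = 1) :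
    f = deltaFn h := by
  have hz : ∑ x ∈ Finset.univ.erase h, f x = 0 := by
    have := Finset.sum_erase_add Finset.univ f (Finset.mem_univ h)
    rw [ocSum hf, h1] at this
    linarith
  have hzz := (Finset.sum_eq_zero_iff_of_nonneg (fun i _ => hf.1 i)).mp hz
  funext x
  by_cases hx : x = h
  · subst hx; simpa [deltaFn] using h1
  · simp only [deltaFn, if_neg hx]
    exact hzz x (Finset.mem_erase.mpr ⟨hx, Finset.mem_univ x⟩)

lemma height_fin {h : P} (hh : h ∈ level P (k + 1)) : Order.height h < ⊤ := by
  rw [show Order.height h = ((k+1 : ℕ) : ℕ∞) from hh]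
  exact WithTop.coe_lt_top _

lemma level_not_lt {h h' : P} (hh : h ∈ level P (k + 1)) (hh' : h' ∈ level P (k + 1)) :
    ¬ h' < h := by
  intro hlt
  have := Order.height_strictMono hlt (height_fin hh')
  rw [show Order.height h' = ((k+1 : ℕ) : ℕ∞) from hh',
    show Order.height h = ((k+1 : ℕ) : ℕ∞) from hh] at this
  exact lt_irrefl _ this

lemma lt_of_le_kplus1 {x h : P} (hh : h ∈ level P (k + 1)) (hx : Order.height x ≤ ((k+1 : ℕ) : ℕ∞))
    (hlt : h < x) : False := by
  have hfx : Order.height x < ⊤ := lt_of_le_of_lt hx (WithTop.coe_lt_top _)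
  have := Order.height_strictMono hlt (height_fin hh)
  rw [show Order.height h = ((k+1 : ℕ) : ℕ∞) from hh] at this
  exact absurd (lt_of_lt_of_le this hx) (lt_irrefl _)

lemma Iio_subset_L0 {h : P} (hh : h ∈ level P (k + 1)) : Set.Iio h ⊆ levelLE P k := by
  intro x hx
  have hfx : Order.height x < ⊤ :=
    lt_of_le_of_lt (Order.height_mono (le_of_lt hx)) (height_fin hh)
  have hlt : Order.height x < Order.height h := Order.height_strictMono hx hfx
  rw [show Order.height h = ((k+1 : ℕ) : ℕ∞) from hh] at hlt
  obtain ⟨n, hn⟩ := WithTop.ne_top_iff_exists.mp (ne_top_of_lt hlt)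
  show Order.height x ≤ (k : ℕ∞)
  rw [← hn] at hlt ⊢
  exact Nat.cast_le.mpr (Nat.lt_succ_iff.mp (Nat.cast_lt.mp hlt))

lemma level_subset_L1 {h : P} (hh : h ∈ level P (k + 1)) : h ∈ levelLE P (k + 1) :=
  le_of_eq hh

lemma level_not_L0 {h : P} (hh : h ∈ level P (k + 1)) : h ∉ levelLE P k := by
  intro hmem
  have : ((k+1 : ℕ) : ℕ∞) ≤ (k : ℕ∞) := le_of_eq_of_le hh.symm hmem
  exact absurd (by exact_mod_cast this) (Nat.not_succ_le_self k)

/-- in a chain of `P^{≤ k+1}` containing `h ∈ P^{k+1}`, everything else is `< h` -/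
lemma lt_of_mem_supp {f : P → ℝ} (hf : f ∈ ocSet P (levelLE P (k + 1))) {h x : P}
    (hh : h ∈ level P (k + 1)) (hfh : f h ≠ 0) (hx : f x ≠ 0) (hxh : x ≠ h) : x < h := by
  have hcomp := hf.2.2.2.2 (Function.mem_support.mpr hx) (Function.mem_support.mpr hfh) hxh
  rcases hcomp with hc | hc
  · exact lt_of_le_of_ne hc hxh
  · exact absurd (lt_of_le_of_ne hc (Ne.symm hxh)) fun hlt =>
      lt_of_le_kplus1 hh (hf.2.2.2.1 (Function.mem_support.mpr hx)) hlt

lemma uniq_level {f : P → ℝ} (hf : f ∈ ocSet P (levelLE P (k + 1))) {h₁ h₂ : P}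
    (hh₁ : h₁ ∈ level P (k + 1)) (hh₂ : h₂ ∈ level P (k + 1))
    (hne₁ : f h₁ ≠ 0) (hne₂ : f h₂ ≠ 0) : h₁ = h₂ := by
  by_contra hne
  exact level_not_lt hh₂ hh₁ (lt_of_mem_supp hf hh₂ hne₂ hne₁ hne)

lemma mem_L0_of {f : P → ℝ} (hf : f ∈ ocSet P (levelLE P (k + 1)))
    (hz : ∀ x, x ∈ level P (k + 1) → f x = 0) : f ∈ ocSet P (levelLE P k) := by
  refine ⟨hf.1, hf.2.1, hf.2.2.1, ?_, hf.2.2.2.2⟩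
  intro x hx
  have hle : Order.height x ≤ ((k+1 : ℕ) : ℕ∞) := hf.2.2.2.1 hx
  rcases lt_or_eq_of_le hle with hlt | heq
  · obtain ⟨n, hn⟩ := WithTop.ne_top_iff_exists.mp (ne_top_of_lt hlt)
    show Order.height x ≤ (k : ℕ∞)
    rw [← hn] at hlt ⊢
    exact Nat.cast_le.mpr (Nat.lt_succ_iff.mp (Nat.cast_lt.mp hlt))
  · exact absurd (hz x heq) (Function.mem_support.mp hx)

lemma deltaFn_mem {h : P} (hh : h ∈ level P (k + 1)) :
    deltaFn h ∈ ocSet P (levelLE P (k + 1)) := by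
  refine ⟨fun x => ?_, Set.toFinite _, ?_, ?_, ?_⟩
  · unfold deltaFn; split <;> norm_num
  · rw [finsum_eq_sum_of_fintype]
    simp [deltaFn]
  · rw [deltaFn_support]
    simpa using level_subset_L1 hh
  · rw [deltaFn_support]
    exact Set.subsingleton_singleton.pairwise _

end Buket

namespace Buket
set_option linter.unusedSectionVars false
open scoped Classical
variable {P : Type} [PartialOrder P] [Fintype P] {k : ℕ}

/-- convex combination of the vertex `h` (weight `t`) and a point `g` of `Δ P_{<h}` -/
noncomputable def mixFn (h : P) (t : ℝ) (g : P → ℝ) : P → ℝ :=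
  fun x => t * deltaFn h x + (1 - t) * g x

lemma g_h_zero {h : P} {g : P → ℝ} (hg : g ∈ ocSet P (Set.Iio h)) : g h = 0 := by
  by_contra hne
  exact absurd (hg.2.2.2.1 (Function.mem_support.mpr hne)) (lt_irrefl h)

lemma mixFn_apply_self {h : P} {t : ℝ} {g : P → ℝ} (hg : g ∈ ocSet P (Set.Iio h)) :
    mixFn h t g h = t := by
  simp [mixFn, g_h_zero hg]

lemma mixFn_zero (h : P) (g : P → ℝ) : mixFn h 0 g = g := by
  funext x; simp [mixFn]

lemma mixFn_one (h : P) (g : P → ℝ) : mixFn h 1 g = deltaFn h := by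
  funext x; simp [mixFn]

lemma mixFn_support {h : P} {t : ℝ} {g : P → ℝ} :
    Function.support (mixFn h t g) ⊆ insert h (Function.support g) := by
  intro x hx
  by_cases hxh : x = h
  · exact Set.mem_insert_iff.mpr (Or.inl hxh)
  · refine Set.mem_insert_iff.mpr (Or.inr ?_)
    have := Function.mem_support.mp hx
    simp only [mixFn, deltaFn, if_neg hxh, mul_zero, zero_add] at this
    exact Function.mem_support.mpr (by intro h0; rw [h0, mul_zero] at this; exact this rfl)

lemma mixFn_mem {h : P} (hh : h ∈ level P (k + 1)) {t : ℝ} (ht0 : 0 ≤ t) (ht1 : t ≤ 1)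
    {g : P → ℝ} (hg : g ∈ ocSet P (Set.Iio h)) :
    mixFn h t g ∈ ocSet P (levelLE P (k + 1)) := by
  refine ⟨fun x => ?_, Set.toFinite _, ?_, ?_, ?_⟩
  · refine add_nonneg (mul_nonneg ht0 ?_) (mul_nonneg (by linarith) (hg.1 x))
    unfold deltaFn; split <;> norm_num
  · rw [finsum_eq_sum_of_fintype]
    have hd : ∑ x : P, deltaFn h x = 1 := by
      simp [deltaFn, Finset.sum_ite_eq', Finset.filter_eq']
    simp only [mixFn, Finset.sum_add_distrib, ← Finset.mul_sum, hd, ocSum hg]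
    ring
  · refine mixFn_support.trans ?_
    rw [Set.insert_subset_iff]
    exact ⟨level_subset_L1 hh,
      (hg.2.2.2.1.trans (Iio_subset_L0 hh)).trans
        (fun x hx => show Order.height x ≤ ((k+1 : ℕ) : ℕ∞) from le_trans hx (Nat.cast_le.mpr (Nat.le_succ k)))⟩
  · exact IsChain.mono mixFn_support
      (hg.2.2.2.2.insert (fun b hb _ => Or.inr (le_of_lt (hg.2.2.2.1 hb))))

/-- the residual point of `Δ P_{<h}` obtained by removing the vertex `h` from `f` -/
noncomputable def resFn (h : P) (f : P → ℝ) : P → ℝ :=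
  fun x => if x = h then 0 else f x / (1 - f h)

lemma resFn_mem {f : P → ℝ} (hf : f ∈ ocSet P (levelLE P (k + 1))) {h : P}
    (hh : h ∈ level P (k + 1)) (hne : f h ≠ 0) (hone : f h ≠ 1) :
    resFn h f ∈ ocSet P (Set.Iio h) := by
  have hlt : f h < 1 := lt_of_le_of_ne (oc_le_one hf h) hone
  have hpos : 0 < 1 - f h := by linarith
  have hsupp : Function.support (resFn h f) ⊆ Function.support f \ {h} := by
    intro x hx
    have hxx := Function.mem_support.mp hx
    by_cases hxh : x = h
    · simp [resFn, hxh] at hxx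
    · simp only [resFn, if_neg hxh] at hxx
      exact ⟨Function.mem_support.mpr (fun h0 => hxx (by rw [h0]; simp)), hxh⟩
  refine ⟨fun x => ?_, Set.toFinite _, ?_, ?_, ?_⟩
  · unfold resFn; split
    · exact le_refl 0
    · exact div_nonneg (hf.1 x) (le_of_lt hpos)
  · rw [finsum_eq_sum_of_fintype]
    have h1 : ∑ x ∈ Finset.univ.erase h, f x = 1 - f h := by
      have := Finset.sum_erase_add Finset.univ f (Finset.mem_univ h)
      rw [ocSum hf] at this; linarith
    have h2 : ∑ x : P, resFn h f x = ∑ x ∈ Finset.univ.erase h, f x / (1 - f h) := by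
      rw [← Finset.sum_erase_add Finset.univ (resFn h f) (Finset.mem_univ h)]
      simp only [resFn, eq_self_iff_true, if_true, add_zero]
      exact Finset.sum_congr rfl (fun x hx => if_neg (Finset.mem_erase.mp hx).1)
    rw [h2, ← Finset.sum_div, h1, div_self (ne_of_gt hpos)]
  · intro x hx
    have := hsupp hx
    exact lt_of_mem_supp hf hh hne (Function.mem_support.mp this.1) this.2
  · exact IsChain.mono (hsupp.trans Set.diff_subset) hf.2.2.2.2

lemma mix_res {f : P → ℝ} (hf : f ∈ ocSet P (levelLE P (k + 1))) {h : P}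
    (hone : f h ≠ 1) : mixFn h (f h) (resFn h f) = f := by
  have hne1 : (1 : ℝ) - f h ≠ 0 := fun h0 => hone (by linarith)
  funext x
  by_cases hxh : x = h
  · subst hxh; simp [mixFn, resFn, deltaFn]
  · simp only [mixFn, resFn, deltaFn, if_neg hxh, mul_zero, zero_add]
    field_simp

lemma res_mix {h : P} {t : ℝ} (ht : t ≠ 1) {g : P → ℝ} (hg : g ∈ ocSet P (Set.Iio h)) :
    resFn h (mixFn h t g) = g := by
  have h1 : (1 : ℝ) - t ≠ 0 := fun h0 => ht (by linarith)
  funext x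
  by_cases hxh : x = h
  · subst hxh; simp [resFn, g_h_zero hg]
  · simp only [resFn, if_neg hxh]
    rw [mixFn_apply_self hg]
    simp only [mixFn, deltaFn, if_neg hxh, mul_zero, zero_add]
    field_simp

lemma mix_level_zero {h h' : P} (hh : h ∈ level P (k + 1)) (hh' : h' ∈ level P (k + 1))
    {g : P → ℝ} (hg : g ∈ ocSet P (Set.Iio h)) : g h' = 0 := by
  by_contra hne
  exact level_not_lt hh hh' (hg.2.2.2.1 (Function.mem_support.mpr hne))

lemma mixFn_apply_level {h h' : P} (hh : h ∈ level P (k + 1)) (hh' : h' ∈ level P (k + 1))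
    {t : ℝ} {g : P → ℝ} (hg : g ∈ ocSet P (Set.Iio h)) (hne : h' ≠ h) :
    mixFn h t g h' = 0 := by
  simp [mixFn, deltaFn, if_neg hne, mix_level_zero hh hh' hg]

end Buket

namespace Buket
set_option linter.unusedSectionVars false
open scoped Classical
variable {P : Type} [PartialOrder P] [Fintype P] {k : ℕ}

lemma ocSet_eq (S : Set P) : ocSet P S =
    {f : P → ℝ | ∀ x, 0 ≤ f x} ∩ {f | ∑ x : P, f x = 1} ∩ {f | ∀ x, x ∉ S → f x = 0} ∩
      {f | ∀ x y, x ≠ y → ¬(x ≤ y ∨ y ≤ x) → f x = 0 ∨ f y = 0} := by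
  ext f
  constructor
  · intro hf
    refine ⟨⟨⟨hf.1, ocSum hf⟩, Function.support_subset_iff'.mp hf.2.2.2.1⟩, ?_⟩
    intro x y hxy hcomp
    by_contra hz
    push_neg at hz
    exact hcomp (hf.2.2.2.2 (Function.mem_support.mpr hz.1) (Function.mem_support.mpr hz.2) hxy)
  · rintro ⟨⟨⟨h1, h2⟩, h3⟩, h4⟩
    refine ⟨h1, Set.toFinite _, by rw [finsum_eq_sum_of_fintype]; exact h2,
      Function.support_subset_iff'.mpr h3, ?_⟩
    intro x hx y hy hxy
    by_contra hcomp
    rcases h4 x y hxy hcomp with h0 | h0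
    · exact Function.mem_support.mp hx h0
    · exact Function.mem_support.mp hy h0

lemma isClosed_ocSet (S : Set P) : IsClosed (ocSet P S) := by
  rw [ocSet_eq]
  refine IsClosed.inter (IsClosed.inter (IsClosed.inter ?_ ?_) ?_) ?_
  · rw [Set.setOf_forall]
    exact isClosed_iInter fun x => isClosed_le continuous_const (continuous_apply x)
  · exact isClosed_eq (continuous_finset_sum _ fun i _ => continuous_apply i) continuous_const
  · rw [Set.setOf_forall]
    refine isClosed_iInter fun x => ?_
    by_cases hx : x ∈ S
    · simp only [hx, not_true_eq_false, false_implies, Set.setOf_true]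
      exact isClosed_univ
    · simp only [hx, not_false_eq_true, true_implies]
      exact isClosed_eq (continuous_apply x) continuous_const
  · rw [Set.setOf_forall]
    refine isClosed_iInter fun x => ?_
    rw [Set.setOf_forall]
    refine isClosed_iInter fun y => ?_
    by_cases hc : x ≠ y → ¬(x ≤ y ∨ y ≤ x) → False
    · have heq : {f : P → ℝ | x ≠ y → ¬(x ≤ y ∨ y ≤ x) → f x = 0 ∨ f y = 0} = Set.univ := by
        ext f; simp only [Set.mem_setOf_eq, Set.mem_univ, iff_true]
        intro h1 h2; exact absurd (hc h1 h2) not_false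
      rw [heq]; exact isClosed_univ
    · push_neg at hc
      obtain ⟨hxy, hcomp, -⟩ := hc
      have heq : {f : P → ℝ | x ≠ y → ¬(x ≤ y ∨ y ≤ x) → f x = 0 ∨ f y = 0}
          = {f | f x = 0} ∪ {f | f y = 0} := by
        ext f
        simp only [Set.mem_setOf_eq, Set.mem_union]
        constructor
        · intro hf; exact hf hxy (by rintro (h | h); exacts [hcomp.1 h, hcomp.2 h])
        · intro hf _ _; exact hf
      rw [heq]
      exact IsClosed.union (isClosed_eq (continuous_apply x) continuous_const)
        (isClosed_eq (continuous_apply y) continuous_const)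

lemma isCompact_ocSet (S : Set P) : IsCompact (ocSet P S) := by
  refine IsCompact.of_isClosed_subset (isCompact_univ_pi fun _ : P => isCompact_Icc (a := (0:ℝ)) (b := 1))
    (isClosed_ocSet S) ?_
  intro f hf
  exact Set.mem_univ_pi.mpr fun x => ⟨hf.1 x, oc_le_one hf x⟩

instance (S : Set P) : CompactSpace (ΔSp S) :=
  isCompact_iff_compactSpace.mp (isCompact_ocSet S)

end Buket

namespace Buket
set_option linter.unusedSectionVars false
open scoped Classical
variable (P : Type) [PartialOrder P] [Fintype P] (k : ℕ)

abbrev TheA : Set (ΔSp (levelLE P (k + 1))) :=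
  {f : ΔSp (levelLE P (k + 1)) | (f : P → ℝ) ∈ ocSet P (levelLE P k)}

abbrev TheQ : Type := QuotBy (ΔSp (levelLE P (k + 1))) (TheA P k)

def qIn : ΔSp (levelLE P (k + 1)) → TheQ P k := fun f => Quot.mk _ (Sum.inl f)

def qBase : TheQ P k := Quot.mk _ (Sum.inr ())

noncomputable def thePt : ∀ h : level P (k + 1), Susp (ΔSp (Set.Iio (h : P))) :=
  fun _ => Quot.mk _ (Sum.inl (Sum.inl false))

abbrev TheW : Type :=
  BigWedge (fun h : level P (k + 1) => Susp (ΔSp (Set.Iio (h : P)))) (thePt P k)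

noncomputable def wIn :
    (Σ h : level P (k + 1), Susp (ΔSp (Set.Iio (h : P)))) → TheW P k :=
  fun z => Quot.mk _ (Sum.inl z)

noncomputable def wBase : TheW P k := Quot.mk _ (Sum.inr ())

/-- the weight of the apex vertex as a function of the suspension parameters -/
noncomputable def tpar (b : Bool) (s : ℝ) : ℝ := if b then 1 - s / 2 else s / 2

lemma tpar_nonneg {b : Bool} {s : ℝ} (hs0 : 0 ≤ s) (hs1 : s ≤ 1) : 0 ≤ tpar b s := by
  cases b <;> simp only [tpar, if_true, if_false, Bool.false_eq_true] <;> linarith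

lemma tpar_le_one {b : Bool} {s : ℝ} (hs0 : 0 ≤ s) (hs1 : s ≤ 1) : tpar b s ≤ 1 := by
  cases b <;> simp only [tpar, if_true, if_false, Bool.false_eq_true] <;> linarith

variable {P k} in
noncomputable def psi0 {h : P} (hh : h ∈ level P (k + 1)) :
    ((Bool ⊕ (Bool × unitInterval × ΔSp (Set.Iio h))) ⊕ ΔSp (Set.Iio h)) → TheQ P k :=
  Sum.elim
    (Sum.elim
      (fun b => if b then qIn P k ⟨deltaFn h, deltaFn_mem hh⟩ else qBase P k)
      (fun p => qIn P k ⟨mixFn h (tpar p.1 ↑p.2.1) ↑p.2.2,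
        mixFn_mem hh (tpar_nonneg p.2.1.2.1 p.2.1.2.2) (tpar_le_one p.2.1.2.1 p.2.1.2.2)
          p.2.2.2⟩))
    (fun g => qIn P k ⟨mixFn h (1 / 2) ↑g,
      mixFn_mem hh (by norm_num) (by norm_num) g.2⟩)

variable {P k} in
lemma psi0_sound {h : P} (hh : h ∈ level P (k + 1)) :
    ∀ a b, ((∃ x y, a = Sum.inl (Sum.inr (x, 0, y)) ∧ b = Sum.inl (Sum.inl x)) ∨
      (∃ x y, a = Sum.inl (Sum.inr (x, 1, y)) ∧ b = Sum.inr y)) →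
      psi0 hh a = psi0 hh b := by
  rintro a b (⟨x, y, rfl, rfl⟩ | ⟨x, y, rfl, rfl⟩)
  · cases x
    · -- (false, 0, y) ~ pole false = base point
      have ht : tpar false ((0 : unitInterval) : ℝ) = 0 := by norm_num [tpar]
      simp only [psi0, Sum.elim_inl, Sum.elim_inr, Bool.false_eq_true, if_false]
      refine Quot.sound ⟨⟨_, ?_, rfl⟩, rfl⟩
      show mixFn h (tpar false ((0 : unitInterval) : ℝ)) ↑y ∈ ocSet P (levelLE P k)
      rw [ht, mixFn_zero]
      exact ocSet_mono (Iio_subset_L0 hh) y.2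
    · -- (true, 0, y) ~ pole true = delta point
      have ht : tpar true ((0 : unitInterval) : ℝ) = 1 := by norm_num [tpar]
      simp only [psi0, Sum.elim_inl, Sum.elim_inr, if_true]
      refine congrArg (qIn P k) (Subtype.ext ?_)
      show mixFn h (tpar true ((0 : unitInterval) : ℝ)) ↑y = deltaFn h
      rw [ht, mixFn_one]
  · -- (x, 1, y) ~ y
    have ht : tpar x ((1 : unitInterval) : ℝ) = 1 / 2 := by
      cases x <;> norm_num [tpar]
    simp only [psi0, Sum.elim_inl, Sum.elim_inr]
    refine congrArg (qIn P k) (Subtype.ext ?_)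
    show mixFn h (tpar x ((1 : unitInterval) : ℝ)) ↑y = mixFn h (1 / 2) ↑y
    rw [ht]

variable {P k} in
noncomputable def psi {h : P} (hh : h ∈ level P (k + 1)) :
    Susp (ΔSp (Set.Iio h)) → TheQ P k :=
  Quot.lift (psi0 hh) (psi0_sound hh)

variable {P k} in
lemma psi_cont {h : P} (hh : h ∈ level P (k + 1)) : Continuous (psi hh) := by
  refine continuous_quot_lift _ ?_
  have hqIn : Continuous (qIn P k) := continuous_quot_mk.comp continuous_inl
  refine Continuous.sumElim (Continuous.sumElim ?_ ?_) ?_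
  · exact continuous_of_discreteTopology
  · refine hqIn.comp (Continuous.subtype_mk ?_ _)
    have htpar : Continuous fun p : Bool × unitInterval × ΔSp (Set.Iio h) =>
        tpar p.1 ↑p.2.1 := by
      have hs : Continuous fun p : Bool × unitInterval × ΔSp (Set.Iio h) =>
          (p.2.1 : ℝ) := continuous_subtype_val.comp (continuous_fst.comp continuous_snd)
      unfold tpar
      refine Continuous.if ?_ (by fun_prop) (by fun_prop)
      have hclopen : IsClopen {p : Bool × unitInterval × ΔSp (Set.Iio h) | p.1 = true} :=
        (isClopen_discrete {true}).preimage continuous_fst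
      simp [hclopen.frontier_eq]
    refine continuous_pi fun x => ?_
    have hg : Continuous fun p : Bool × unitInterval × ΔSp (Set.Iio h) =>
        (p.2.2 : P → ℝ) x :=
      (continuous_apply x).comp (continuous_subtype_val.comp (continuous_snd.comp continuous_snd))
    exact (htpar.mul continuous_const).add ((continuous_const.sub htpar).mul hg)
  · refine hqIn.comp (Continuous.subtype_mk ?_ _)
    refine continuous_pi fun x => ?_
    have hg : Continuous fun g : ΔSp (Set.Iio h) => (g : P → ℝ) x :=
      (continuous_apply x).comp continuous_subtype_val
    simp only [mixFn]
    exact (continuous_const.mul continuous_const).add (continuous_const.mul hg)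

noncomputable def bigPsi : TheW P k → TheQ P k :=
  Quot.lift
    (Sum.elim (fun z : Σ h : level P (k + 1), Susp (ΔSp (Set.Iio (h : P))) => psi z.1.2 z.2)
      (fun _ => qBase P k))
    (by
      rintro a b ⟨⟨i, rfl⟩, rfl⟩
      simp only [Sum.elim_inl, Sum.elim_inr]
      show psi i.2 (thePt P k i) = qBase P k
      simp only [thePt, psi, psi0, Sum.elim_inl, Bool.false_eq_true, if_false])

lemma bigPsi_cont : Continuous (bigPsi P k) := by
  refine continuous_quot_lift _ ?_
  exact Continuous.sumElim (continuous_sigma fun i => psi_cont i.2) continuous_const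

end Buket

namespace Buket
set_option linter.unusedSectionVars false
open scoped Classical
variable (P : Type) [PartialOrder P] [Fintype P] (k : ℕ)

variable {P k} in
/-- the suspension coordinates of a point `f` with apex weight in `(0,1)` -/
noncomputable def sPair {f : ΔSp (levelLE P (k + 1))} {h : P} (hh : h ∈ level P (k + 1))
    (hne : (f : P → ℝ) h ≠ 0) (hone : (f : P → ℝ) h ≠ 1) :
    Bool × unitInterval × ΔSp (Set.Iio h) :=
  if _ : 1 / 2 < (f : P → ℝ) h then
    (true, ⟨2 * (1 - (f : P → ℝ) h), by
      constructor
      · nlinarith [oc_le_one f.2 h]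
      · nlinarith⟩,
      ⟨resFn h ↑f, resFn_mem f.2 hh hne hone⟩)
  else
    (false, ⟨2 * (f : P → ℝ) h, by
      constructor
      · nlinarith [f.2.1 h]
      · nlinarith⟩,
      ⟨resFn h ↑f, resFn_mem f.2 hh hne hone⟩)

variable {P k} in
noncomputable def suspOf (f : ΔSp (levelLE P (k + 1))) {h : P} (hh : h ∈ level P (k + 1))
    (hne : (f : P → ℝ) h ≠ 0) : Susp (ΔSp (Set.Iio h)) :=
  if hone : (f : P → ℝ) h = 1 then Quot.mk _ (Sum.inl (Sum.inl true))
  else Quot.mk _ (Sum.inl (Sum.inr (sPair hh hne hone)))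

noncomputable def phi0 : (ΔSp (levelLE P (k + 1)) ⊕ Unit) → TheW P k :=
  Sum.elim
    (fun f => if hx : ∃ h : level P (k + 1), (f : P → ℝ) ↑h ≠ 0 then
        wIn P k ⟨hx.choose, suspOf f hx.choose.2 hx.choose_spec⟩
      else wBase P k)
    (fun _ => wBase P k)

lemma phi0_spec (f : ΔSp (levelLE P (k + 1))) (h : level P (k + 1))
    (hne : (f : P → ℝ) ↑h ≠ 0) :
    phi0 P k (Sum.inl f) = wIn P k ⟨h, suspOf f h.2 hne⟩ := by
  have hx : ∃ h' : level P (k + 1), (f : P → ℝ) ↑h' ≠ 0 := ⟨h, hne⟩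
  simp only [phi0, Sum.elim_inl, dif_pos hx]
  have e : hx.choose = h := Subtype.ext (uniq_level f.2 hx.choose.2 h.2 hx.choose_spec hne)
  subst e
  rfl

noncomputable def phi : TheQ P k → TheW P k :=
  Quot.lift (phi0 P k)
    (by
      rintro a b ⟨⟨x, hxA, rfl⟩, rfl⟩
      show phi0 P k (Sum.inl x) = phi0 P k (Sum.inr ())
      have hnx : ¬∃ h : level P (k + 1), (x : P → ℝ) ↑h ≠ 0 := by
        rintro ⟨h', hne'⟩
        exact level_not_L0 h'.2 (hxA.2.2.2.1 (Function.mem_support.mpr hne'))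
      simp only [phi0, Sum.elim_inl, Sum.elim_inr, dif_neg hnx])

lemma right_inv : ∀ q : TheQ P k, bigPsi P k (phi P k q) = q := by
  refine Quot.ind ?_
  rintro (f | u)
  · by_cases hx : ∃ h : level P (k + 1), (f : P → ℝ) ↑h ≠ 0
    · obtain ⟨h, hne⟩ := hx
      show bigPsi P k (phi0 P k (Sum.inl f)) = qIn P k f
      rw [phi0_spec P k f h hne]
      show psi h.2 (suspOf f h.2 hne) = qIn P k f
      unfold suspOf
      by_cases hone : (f : P → ℝ) ↑h = 1
      · rw [dif_pos hone]
        show psi0 h.2 (Sum.inl (Sum.inl true)) = qIn P k f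
        simp only [psi0, Sum.elim_inl, if_true]
        exact congrArg (qIn P k) (Subtype.ext (eq_delta f.2 hone).symm)
      · rw [dif_neg hone]
        show psi0 h.2 (Sum.inl (Sum.inr (sPair h.2 hne hone))) = qIn P k f
        unfold sPair
        by_cases hhalf : 1 / 2 < (f : P → ℝ) ↑h
        · rw [dif_pos hhalf]
          simp only [psi0, Sum.elim_inl]
          refine congrArg (qIn P k) (Subtype.ext ?_)
          have key : mixFn (h : P) (tpar true (2 * (1 - (f : P → ℝ) ↑h)))
              (resFn (h : P) (f : P → ℝ)) = (f : P → ℝ) := by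
            have ht : tpar true (2 * (1 - (f : P → ℝ) ↑h)) = (f : P → ℝ) ↑h := by
              unfold tpar; simp
            rw [ht]
            exact mix_res f.2 hone
          exact key
        · rw [dif_neg hhalf]
          simp only [psi0, Sum.elim_inl]
          refine congrArg (qIn P k) (Subtype.ext ?_)
          have key : mixFn (h : P) (tpar false (2 * (f : P → ℝ) ↑h))
              (resFn (h : P) (f : P → ℝ)) = (f : P → ℝ) := by
            have ht : tpar false (2 * (f : P → ℝ) ↑h) = (f : P → ℝ) ↑h := by
              unfold tpar; simp
            rw [ht]
            exact mix_res f.2 hone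
          exact key
    · have hA : f ∈ TheA P k :=
        mem_L0_of f.2 (fun x hx' => by
          by_contra hne
          exact hx ⟨⟨x, hx'⟩, hne⟩)
      show bigPsi P k (phi0 P k (Sum.inl f)) = qIn P k f
      have hzero : phi0 P k (Sum.inl f) = wBase P k := by
        simp only [phi0, Sum.elim_inl, dif_neg hx]
      rw [hzero]
      show qBase P k = qIn P k f
      exact (Quot.sound ⟨⟨f, hA, rfl⟩, rfl⟩).symm
  · cases u
    rfl

end Buket

namespace Buket
set_option linter.unusedSectionVars false
open scoped Classical
variable (P : Type) [PartialOrder P] [Fintype P] (k : ℕ)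

lemma left_inv : ∀ w : TheW P k, phi P k (bigPsi P k w) = w := by
  refine Quot.ind ?_
  rintro (⟨h, zs⟩ | u)
  case inr => cases u; rfl
  induction zs using Quot.ind with | _ rep => ?_
  rcases rep with (b | ⟨b, s, g⟩) | g
  -- pole case
  · cases b
    · -- pole false
      have e : psi0 h.2 (Sum.inl (Sum.inl false)) = qBase P k := by
        simp [psi0]
      show phi P k (psi0 h.2 (Sum.inl (Sum.inl false))) = _
      rw [e]
      exact (Quot.sound ⟨⟨h, rfl⟩, rfl⟩).symm
    · -- pole true
      have e : psi0 h.2 (Sum.inl (Sum.inl true)) =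
          qIn P k ⟨deltaFn (h : P), deltaFn_mem h.2⟩ := by
        simp [psi0]
      show phi P k (psi0 h.2 (Sum.inl (Sum.inl true))) = _
      rw [e]
      have hne : ((⟨deltaFn (h : P), deltaFn_mem h.2⟩ : ΔSp (levelLE P (k + 1))) : P → ℝ)
          (h : P) ≠ 0 := by
        show deltaFn (h : P) (h : P) ≠ 0
        rw [deltaFn_self]; norm_num
      show phi0 P k (Sum.inl ⟨deltaFn (h : P), deltaFn_mem h.2⟩) = _
      rw [phi0_spec P k _ h hne]
      unfold suspOf
      rw [dif_pos (show ((⟨deltaFn (h : P), deltaFn_mem h.2⟩ :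
        ΔSp (levelLE P (k + 1))) : P → ℝ) (h : P) = 1 from deltaFn_self (h : P))]
      rfl
  -- cylinder case
  · set f0 : ΔSp (levelLE P (k + 1)) :=
      ⟨mixFn (h : P) (tpar b ↑s) ↑g,
        mixFn_mem h.2 (tpar_nonneg s.2.1 s.2.2) (tpar_le_one s.2.1 s.2.2) g.2⟩ with hf0
    have hfh : (f0 : P → ℝ) (h : P) = tpar b ↑s := mixFn_apply_self g.2
    show phi P k (psi0 h.2 (Sum.inl (Sum.inr (b, s, g)))) = _
    have hpsi : psi0 h.2 (Sum.inl (Sum.inr (b, s, g))) = qIn P k f0 := rfl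
    rw [hpsi]
    show phi0 P k (Sum.inl f0) = _
    cases b
    · -- b = false, t = s/2
      by_cases hs0 : (s : ℝ) = 0
      · -- collapses to the base point
        have hnx : ¬∃ h' : level P (k + 1), (f0 : P → ℝ) ↑h' ≠ 0 := by
          rintro ⟨h', hne'⟩
          by_cases hvh : (h' : P) = (h : P)
          · rw [hvh] at hne'
            apply hne'
            rw [hfh]; unfold tpar; simp [hs0]
          · exact hne' (mixFn_apply_level h.2 h'.2 g.2 hvh)
        have hz : phi0 P k (Sum.inl f0) = wBase P k := by
          simp only [phi0, Sum.elim_inl, dif_neg hnx]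
        rw [hz]
        have hs : s = (0 : unitInterval) := Subtype.ext hs0
        subst hs
        have esusp : (Quot.mk _ (Sum.inl (Sum.inr (false, (0 : unitInterval), g))) :
            Susp (ΔSp (Set.Iio (h : P)))) = Quot.mk _ (Sum.inl (Sum.inl false)) :=
          Quot.sound (Or.inl ⟨false, g, rfl, rfl⟩)
        calc wBase P k
            = Quot.mk _ (Sum.inl (⟨h, thePt P k h⟩ :
                Σ h : level P (k + 1), Susp (ΔSp (Set.Iio (h : P))))) :=
              (Quot.sound ⟨⟨h, rfl⟩, rfl⟩).symm
          _ = _ := congrArg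
              (fun z : Susp (ΔSp (Set.Iio (h : P))) => Quot.mk _ (Sum.inl
                (⟨h, z⟩ : Σ h : level P (k + 1), Susp (ΔSp (Set.Iio (h : P))))))
              esusp.symm
      · -- generic point on the lower half
        have hne : (f0 : P → ℝ) (h : P) ≠ 0 := by
          rw [hfh]; unfold tpar
          simp only [Bool.false_eq_true, if_false]
          intro h0; exact hs0 (by linarith)
        rw [phi0_spec P k f0 h hne]
        have hone : (f0 : P → ℝ) (h : P) ≠ 1 := by
          rw [hfh]; unfold tpar
          simp only [Bool.false_eq_true, if_false]
          intro h0; have := s.2.2; linarith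
        unfold suspOf
        rw [dif_neg hone]
        have hhalf : ¬ (1 / 2 < (f0 : P → ℝ) (h : P)) := by
          rw [hfh]; unfold tpar
          simp only [Bool.false_eq_true, if_false]
          intro hlt; have := s.2.2; linarith
        unfold sPair
        rw [dif_neg hhalf]
        refine congrArg
          (fun z : Bool × unitInterval × ΔSp (Set.Iio (h : P)) => Quot.mk _ (Sum.inl
            (⟨h, Quot.mk _ (Sum.inl (Sum.inr z))⟩ :
              Σ h : level P (k + 1), Susp (ΔSp (Set.Iio (h : P)))))) ?_
        refine congrArg₂ Prod.mk rfl (congrArg₂ Prod.mk ?_ ?_)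
        · refine Subtype.ext ?_
          show 2 * (f0 : P → ℝ) (h : P) = (s : ℝ)
          rw [hfh]; unfold tpar
          simp only [Bool.false_eq_true, if_false]; ring
        · exact Subtype.ext (res_mix (hfh ▸ hone) g.2)
    · -- b = true, t = 1 - s/2
      have hne : (f0 : P → ℝ) (h : P) ≠ 0 := by
        rw [hfh]; unfold tpar
        simp only [if_true]
        intro h0; have := s.2.2; linarith
      rw [phi0_spec P k f0 h hne]
      unfold suspOf
      by_cases hs0 : (s : ℝ) = 0
      · -- apex
        have h1 : (f0 : P → ℝ) (h : P) = 1 := by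
          rw [hfh]; unfold tpar; simp [hs0]
        rw [dif_pos h1]
        have hs : s = (0 : unitInterval) := Subtype.ext hs0
        subst hs
        have esusp : (Quot.mk _ (Sum.inl (Sum.inr (true, (0 : unitInterval), g))) :
            Susp (ΔSp (Set.Iio (h : P)))) = Quot.mk _ (Sum.inl (Sum.inl true)) :=
          Quot.sound (Or.inl ⟨true, g, rfl, rfl⟩)
        exact congrArg
          (fun z : Susp (ΔSp (Set.Iio (h : P))) => Quot.mk _ (Sum.inl
            (⟨h, z⟩ : Σ h : level P (k + 1), Susp (ΔSp (Set.Iio (h : P))))))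
          esusp.symm
      · have hone : (f0 : P → ℝ) (h : P) ≠ 1 := by
          rw [hfh]; unfold tpar
          simp only [if_true]
          intro h0; exact hs0 (by linarith)
        rw [dif_neg hone]
        unfold sPair
        by_cases hs1 : (s : ℝ) = 1
        · -- equator reached from above
          have hh2 : ¬ (1 / 2 < (f0 : P → ℝ) (h : P)) := by
            rw [hfh]; unfold tpar
            simp only [if_true]
            rw [hs1]; norm_num
          rw [dif_neg hh2]
          have hs : s = (1 : unitInterval) := Subtype.ext hs1
          subst hs
          have e1 : (Quot.mk _ (Sum.inl (Sum.inr (false, (1 : unitInterval), g))) :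
              Susp (ΔSp (Set.Iio (h : P)))) = Quot.mk _ (Sum.inr g) :=
            Quot.sound (Or.inr ⟨false, g, rfl, rfl⟩)
          have e2 : (Quot.mk _ (Sum.inl (Sum.inr (true, (1 : unitInterval), g))) :
              Susp (ΔSp (Set.Iio (h : P)))) = Quot.mk _ (Sum.inr g) :=
            Quot.sound (Or.inr ⟨true, g, rfl, rfl⟩)
          refine Eq.trans (congrArg
            (fun z : Susp (ΔSp (Set.Iio (h : P))) => Quot.mk _ (Sum.inl
              (⟨h, z⟩ : Σ h : level P (k + 1), Susp (ΔSp (Set.Iio (h : P)))))) ?_)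
            (congrArg
            (fun z : Susp (ΔSp (Set.Iio (h : P))) => Quot.mk _ (Sum.inl
              (⟨h, z⟩ : Σ h : level P (k + 1), Susp (ΔSp (Set.Iio (h : P))))))
            e2.symm)
          refine Eq.trans (congrArg (fun p : Bool × unitInterval × ΔSp (Set.Iio (h : P)) =>
            (Quot.mk _ (Sum.inl (Sum.inr p)) : Susp (ΔSp (Set.Iio (h : P))))) ?_) e1
          refine congrArg₂ Prod.mk rfl (congrArg₂ Prod.mk ?_ ?_)
          · refine Subtype.ext ?_
            show 2 * (f0 : P → ℝ) (h : P) = ((1 : unitInterval) : ℝ)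
            rw [hfh]; unfold tpar
            simp only [if_true]
            norm_num
          · exact Subtype.ext (res_mix (hfh ▸ hone) g.2)
        · -- strictly upper half
          have hh2 : 1 / 2 < (f0 : P → ℝ) (h : P) := by
            rw [hfh]; unfold tpar
            simp only [if_true]
            have h2 := s.2.2
            have : (s : ℝ) < 1 := lt_of_le_of_ne h2 hs1
            linarith
          rw [dif_pos hh2]
          refine congrArg
            (fun z : Bool × unitInterval × ΔSp (Set.Iio (h : P)) => Quot.mk _ (Sum.inl
              (⟨h, Quot.mk _ (Sum.inl (Sum.inr z))⟩ :
                Σ h : level P (k + 1), Susp (ΔSp (Set.Iio (h : P)))))) ?_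
          refine congrArg₂ Prod.mk rfl (congrArg₂ Prod.mk ?_ ?_)
          · refine Subtype.ext ?_
            show 2 * (1 - (f0 : P → ℝ) (h : P)) = (s : ℝ)
            rw [hfh]; unfold tpar
            simp only [if_true]; ring
          · exact Subtype.ext (res_mix (hfh ▸ hone) g.2)
  -- equator case
  · set f0 : ΔSp (levelLE P (k + 1)) :=
      ⟨mixFn (h : P) (1 / 2) ↑g, mixFn_mem h.2 (by norm_num) (by norm_num) g.2⟩ with hf0
    have hfh : (f0 : P → ℝ) (h : P) = 1 / 2 := mixFn_apply_self g.2
    show phi P k (psi0 h.2 (Sum.inr g)) = _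
    have hpsi : psi0 h.2 (Sum.inr g) = qIn P k f0 := rfl
    rw [hpsi]
    show phi0 P k (Sum.inl f0) = _
    have hne : (f0 : P → ℝ) (h : P) ≠ 0 := by rw [hfh]; norm_num
    rw [phi0_spec P k f0 h hne]
    have hone : (f0 : P → ℝ) (h : P) ≠ 1 := by rw [hfh]; norm_num
    unfold suspOf
    rw [dif_neg hone]
    have hhalf : ¬ (1 / 2 < (f0 : P → ℝ) (h : P)) := by rw [hfh]; norm_num
    unfold sPair
    rw [dif_neg hhalf]
    refine congrArg
      (fun z : Susp (ΔSp (Set.Iio (h : P))) => Quot.mk _ (Sum.inl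
        (⟨h, z⟩ : Σ h : level P (k + 1), Susp (ΔSp (Set.Iio (h : P)))))) ?_
    have e1 : (Quot.mk _ (Sum.inl (Sum.inr (false, (1 : unitInterval), g))) :
        Susp (ΔSp (Set.Iio (h : P)))) = Quot.mk _ (Sum.inr g) :=
      Quot.sound (Or.inr ⟨false, g, rfl, rfl⟩)
    refine Eq.trans (congrArg (fun p : Bool × unitInterval × ΔSp (Set.Iio (h : P)) =>
      (Quot.mk _ (Sum.inl (Sum.inr p)) : Susp (ΔSp (Set.Iio (h : P))))) ?_) e1
    refine congrArg₂ Prod.mk rfl (congrArg₂ Prod.mk ?_ ?_)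
    · refine Subtype.ext ?_
      show 2 * (f0 : P → ℝ) (h : P) = ((1 : unitInterval) : ℝ)
      rw [hfh]; norm_num
    · exact Subtype.ext (res_mix (hfh ▸ hone) g.2)

end Buket

namespace Buket
set_option linter.unusedSectionVars false
open scoped Classical
variable (P : Type) [PartialOrder P] [Fintype P] (k : ℕ)

/-- total weight of the top-level vertices -/
noncomputable def sLev (f : P → ℝ) : ℝ := ∑ x : P, if x ∈ level P (k + 1) then f x else 0

lemma sLev_cont : Continuous fun f : ΔSp (levelLE P (k + 1)) => sLev P k ↑f := by
  unfold sLev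
  refine continuous_finset_sum _ fun i _ => ?_
  by_cases hi : i ∈ level P (k + 1)
  · simp only [if_pos hi]
    exact (continuous_apply i).comp continuous_subtype_val
  · simp only [if_neg hi]
    exact continuous_const

variable {P k} in
lemma sLev_eq_zero {f : P → ℝ} (hf : ∀ x, 0 ≤ f x) :
    sLev P k f = 0 ↔ ∀ x ∈ level P (k + 1), f x = 0 := by
  unfold sLev
  rw [Finset.sum_eq_zero_iff_of_nonneg (fun i _ => by
    by_cases hi : i ∈ level P (k + 1)
    · rw [if_pos hi]; exact hf i
    · rw [if_neg hi])]
  constructor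
  · intro hz x hx
    have := hz x (Finset.mem_univ x)
    rwa [if_pos hx] at this
  · intro hz i _
    by_cases hi : i ∈ level P (k + 1)
    · rw [if_pos hi]; exact hz i hi
    · rw [if_neg hi]

noncomputable def mEmb : ΔSp (levelLE P (k + 1)) → (P → ℝ) :=
  fun f x => sLev P k ↑f * (f : P → ℝ) x

lemma mEmb_cont : Continuous (mEmb P k) := by
  refine continuous_pi fun x => ?_
  exact (sLev_cont P k).mul ((continuous_apply x).comp continuous_subtype_val)

lemma mEmb_sum (f : ΔSp (levelLE P (k + 1))) : ∑ x : P, mEmb P k f x = sLev P k ↑f := by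
  unfold mEmb
  rw [← Finset.mul_sum, ocSum f.2, mul_one]

variable {P k} in
lemma memA_of_sLev_zero {f : ΔSp (levelLE P (k + 1))} (hz : sLev P k ↑f = 0) :
    f ∈ TheA P k :=
  mem_L0_of f.2 ((sLev_eq_zero f.2.1).mp hz)

noncomputable def MQ : TheQ P k → (P → ℝ) :=
  Quot.lift (Sum.elim (mEmb P k) (fun _ => 0))
    (by
      rintro a b ⟨⟨x, hxA, rfl⟩, rfl⟩
      show mEmb P k x = 0
      have hz : sLev P k ↑x = 0 := (sLev_eq_zero x.2.1).mpr (fun z hz' => by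
        by_contra hne
        exact level_not_L0 hz' (hxA.2.2.2.1 (Function.mem_support.mpr hne)))
      funext y
      unfold mEmb
      rw [hz, zero_mul]
      rfl)

lemma MQ_cont : Continuous (MQ P k) :=
  continuous_quot_lift _ (Continuous.sumElim (mEmb_cont P k) continuous_const)

lemma MQ_inj : Function.Injective (MQ P k) := by
  refine Quot.ind ?_
  intro p
  refine Quot.ind ?_
  intro q hpq
  rcases p with f | u <;> rcases q with g | v
  · have hfg : mEmb P k f = mEmb P k g := hpq
    have hsum : sLev P k ↑f = sLev P k ↑g := by
      rw [← mEmb_sum P k f, ← mEmb_sum P k g, hfg]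
    by_cases hc : sLev P k (↑f : P → ℝ) = 0
    · have hfA : f ∈ TheA P k := memA_of_sLev_zero hc
      have hgA : g ∈ TheA P k := memA_of_sLev_zero (hsum ▸ hc)
      exact (Quot.sound ⟨⟨f, hfA, rfl⟩, rfl⟩).trans (Quot.sound ⟨⟨g, hgA, rfl⟩, rfl⟩).symm
    · have hval : (f : P → ℝ) = (g : P → ℝ) := funext fun x => by
        refine mul_left_cancel₀ hc ?_
        have hx := congrFun hfg x
        unfold mEmb at hx
        rw [hx, hsum]
      exact congrArg (fun r => Quot.mk _ (Sum.inl r)) (Subtype.ext hval)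
  · have hz : sLev P k (↑f : P → ℝ) = 0 := by
      rw [← mEmb_sum P k f, show mEmb P k f = 0 from hpq]
      simp
    cases v
    exact Quot.sound ⟨⟨f, memA_of_sLev_zero hz, rfl⟩, rfl⟩
  · have hz : sLev P k (↑g : P → ℝ) = 0 := by
      rw [← mEmb_sum P k g, show mEmb P k g = 0 from hpq.symm]
      simp
    cases u
    exact (Quot.sound ⟨⟨g, memA_of_sLev_zero hz, rfl⟩, rfl⟩).symm
  · cases u; cases v; rfl

lemma t2_TheQ : T2Space (TheQ P k) :=
  T2Space.of_injective_continuous (MQ_inj P k) (MQ_cont P k)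

noncomputable def theEquiv : TheW P k ≃ TheQ P k :=
  ⟨bigPsi P k, phi P k, left_inv P k, right_inv P k⟩

end Buket


/-- **Theorem `Buket_nadstrojka`.** For a finite poset `P` and `k ≥ 0`, the
quotient `ΔP^{≤k+1} / ΔP^{≤k}` is the wedge `⋁_{h ∈ P^{k+1}} Σ ΔP_{<h}`. -/
theorem quotient_orderComplex_homeo_bigWedge_susp
    (P : Type) [PartialOrder P] [Finite P] (k : ℕ) :
    ∃ pt : ∀ h : level P (k + 1), Susp (ΔSp (Set.Iio (h : P))),
      Nonempty
        (QuotBy (ΔSp (levelLE P (k + 1)))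
            {f : ΔSp (levelLE P (k + 1)) | (f : P → ℝ) ∈ ocSet P (levelLE P k)} ≃ₜ
          BigWedge (fun h : level P (k + 1) => Susp (ΔSp (Set.Iio (h : P)))) pt) := by
  haveI := Fintype.ofFinite P
  refine ⟨Buket.thePt P k, ⟨?_⟩⟩
  haveI : T2Space (Buket.TheQ P k) := Buket.t2_TheQ P k
  have hcont : Continuous (Buket.theEquiv P k) := Buket.bigPsi_cont P k
  exact hcont.homeoOfEquivCompactToT2.symm
end
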